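/- arXiv:2604.02649 — 6 statements merged into one kernel-verified Lean document; each statement's English description precedes it below -/
import Mathlib

section
/- Let (γ_n)_{n≥0} be a nested sequence of hyperbolic elements of SL(2,ℝ), with attracting fixed points γ_n⁺, repelling fixed points γ_n⁻, and with t_n > 0 the times such that Axis(γ_n) meets the vertical ray {eᵗ i : t ≥ 0} exactly at e^{t_n} i. Then γ_n⁺ → +∞, γ_n⁻ → −∞, and t_n → +∞ as n → ∞. -/
open UpperHalfPlane Matrix Real Filter Topology
open scoped MatrixGroups

noncomputable section

namespace BellisFormal

/-- The point `eᵗ i` of the upper half-plane. -/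
def vray (t : ℝ) : ℍ := ⟨⟨0, Real.exp t⟩, Real.exp_pos t⟩

/-- Translation length of `γ`. -/
def transLength (γ : SL(2, ℝ)) : ℝ := ⨅ z : ℍ, dist z (γ • z)

/-- `γ` is hyperbolic: `|tr γ| > 2`. -/
def IsHyperbolic (γ : SL(2, ℝ)) : Prop :=
  2 < |Matrix.trace (γ : Matrix (Fin 2) (Fin 2) ℝ)|

/-- Axis of `γ`. -/
def Axis (γ : SL(2, ℝ)) : Set ℍ := {z : ℍ | dist z (γ • z) = transLength γ}

/-- `x` is a real fixed point of the Möbius map of `γ`. -/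
def IsFixedPt (γ : SL(2, ℝ)) (x : ℝ) : Prop :=
  γ 1 0 * x ^ 2 + (γ 1 1 - γ 0 0) * x - γ 0 1 = 0

def IsAttractingFixedPt (γ : SL(2, ℝ)) (x : ℝ) : Prop :=
  IsFixedPt γ x ∧ 1 < (γ 1 0 * x + γ 1 1) ^ 2

def IsRepellingFixedPt (γ : SL(2, ℝ)) (x : ℝ) : Prop :=
  IsFixedPt γ x ∧ (γ 1 0 * x + γ 1 1) ^ 2 < 1

instance : TopologicalSpace SL(2, ℝ) :=
  TopologicalSpace.induced (fun g => (g : Matrix (Fin 2) (Fin 2) ℝ)) inferInstance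

structure IsNestedSequence (γ : ℕ → SL(2, ℝ)) (γp γm : ℕ → ℝ) (t : ℕ → ℝ) : Prop where
  hyperbolic : ∀ n, IsHyperbolic (γ n)
  discrete : DiscreteTopology (Subgroup.closure (Set.range γ) : Subgroup SL(2, ℝ))
  attracting : ∀ n, IsAttractingFixedPt (γ n) (γp n)
  repelling : ∀ n, IsRepellingFixedPt (γ n) (γm n)
  plus_pos : ∀ n, 0 < γp n
  plus_mono : StrictMono γp
  minus_neg : ∀ n, γm n < 0
  minus_anti : StrictAnti γm
  t_pos : ∀ n, 0 < t n
  axis_meets : ∀ n, ∀ s : ℝ, 0 ≤ s → (vray s ∈ Axis (γ n) ↔ s = t n)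
  len_anti : StrictAnti fun n => transLength (γ n)
  len_tendsto : Filter.Tendsto (fun n => transLength (γ n)) Filter.atTop (nhds 0)

/-- geodesic flow matrix -/
def A (t : ℝ) : SL(2, ℝ) :=
  ⟨!![Real.exp (t / 2), 0; 0, Real.exp (-(t / 2))], by
    simp [Matrix.det_fin_two_of, ← Real.exp_add]⟩

/-- horocyclic flow matrix -/
def N (s : ℝ) : SL(2, ℝ) :=
  ⟨!![1, s; 0, 1], by simp [Matrix.det_fin_two_of]⟩

/-- the distance `d₁` between unit tangent vectors encoded as elements of `SL(2,ℝ)` -/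
def d1 (g h : SL(2, ℝ)) : ℝ :=
  dist (g • vray 0) (h • vray 0) + dist (g • vray 1) (h • vray 1)

/-- product `α 0 * α 1 * ⋯ * α n` -/
def seqProd (α : ℕ → SL(2, ℝ)) (n : ℕ) : SL(2, ℝ) :=
  ((List.range (n + 1)).map α).prod


/-- the point `a + y i` of the upper half-plane -/
def mkPt (a y : ℝ) (hy : 0 < y) : ℍ := ⟨⟨a, y⟩, hy⟩

/-- the Busemann cocycle values `r_n = B_∞(β_n⁻¹ • i, i)` -/
def busR (α : ℕ → SL(2, ℝ)) (n : ℕ) : ℝ :=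
  - Real.log (((seqProd α n)⁻¹ • UpperHalfPlane.I).im)


/-! ### Auxiliary lemmas -/

section Helpers

lemma denom_ne (g : SL(2, ℝ)) (z : ℍ) : ((g 1 0 : ℂ)) * z + g 1 1 ≠ 0 := by
  intro hden
  have him : (g 1 0 : ℝ) * z.im = 0 := by
    simpa using congrArg Complex.im hden
  have hc : (g 1 0 : ℝ) = 0 := by
    rcases mul_eq_zero.mp him with h | h
    · exact h
    · exact absurd h z.im_ne_zero
  have hre : (g 1 0 : ℝ) * z.re + g 1 1 = 0 := by
    simpa using congrArg Complex.re hden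
  have hd : (g 1 1 : ℝ) = 0 := by rw [hc] at hre; simpa using hre
  have hdet := g.prop
  rw [Matrix.det_fin_two] at hdet
  rw [hc, hd] at hdet
  simp at hdet

lemma coe_smul_sl (g : SL(2, ℝ)) (z : ℍ) :
    ((g • z : ℍ) : ℂ) = ((g 0 0 : ℂ) * z + g 0 1) / ((g 1 0 : ℂ) * z + g 1 1) := by
  rw [UpperHalfPlane.specialLinearGroup_apply]
  simp

lemma im_smul_sl (g : SL(2, ℝ)) (z : ℍ) :
    (g • z).im = z.im / Complex.normSq ((g 1 0 : ℂ) * z + g 1 1) := by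
  have hdet := g.prop
  rw [Matrix.det_fin_two] at hdet
  have h1 : (g • z).im = (((g 0 0 : ℂ) * z + g 0 1) / ((g 1 0 : ℂ) * z + g 1 1)).im := by
    rw [← UpperHalfPlane.coe_im, coe_smul_sl]
  rw [h1, Complex.div_im]
  have hns : Complex.normSq ((g 1 0 : ℂ) * z + g 1 1) ≠ 0 :=
    ne_of_gt (Complex.normSq_pos.mpr (denom_ne g z))
  simp only [Complex.add_im, Complex.add_re, Complex.mul_im, Complex.mul_re,
    Complex.ofReal_re, Complex.ofReal_im, UpperHalfPlane.coe_im, UpperHalfPlane.coe_re]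
  field_simp
  ring_nf
  nlinarith [z.im_pos]

lemma dist_smul_sl (g : SL(2, ℝ)) (z : ℍ) :
    dist z (g • z) = 2 * Real.arsinh (norm
      ((g 1 0 : ℂ) * (z : ℂ) ^ 2 + ((g 1 1 : ℂ) - g 0 0) * z - g 0 1) / (2 * z.im)) := by
  set den : ℂ := (g 1 0 : ℂ) * z + g 1 1 with hden
  have hdne : den ≠ 0 := denom_ne g z
  have habs : norm den ≠ 0 := norm_ne_zero_iff.mpr hdne
  rw [UpperHalfPlane.dist_eq]
  congr 1
  have h1 : dist (z : ℂ) ((g • z : ℍ) : ℂ) =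
      norm ((g 1 0 : ℂ) * (z : ℂ) ^ 2 + ((g 1 1 : ℂ) - g 0 0) * z - g 0 1)
        / norm den := by
    rw [Complex.dist_eq, coe_smul_sl]
    rw [← norm_div]
    congr 1
    rw [hden] at hdne ⊢
    rw [eq_div_iff hdne, sub_mul, div_mul_cancel₀ _ hdne]
    ring
  have h2 : Real.sqrt (z.im * (g • z).im) = z.im / norm den := by
    rw [im_smul_sl g z, ← hden]
    rw [show z.im * (z.im / Complex.normSq den) = (z.im / norm den) ^ 2 by
      rw [div_pow, Complex.sq_norm]; ring]
    exact Real.sqrt_sq (by positivity)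
  rw [h1, h2]
  have hzim := z.im_pos
  field_simp

variable {g : SL(2, ℝ)} {p m : ℝ}

lemma vieta1 (hp : IsFixedPt g p) (hm : IsFixedPt g m) (hne : m < p) :
    g 0 0 - g 1 1 = g 1 0 * (p + m) := by
  unfold IsFixedPt at hp hm
  have key : (p - m) * (g 1 0 * (p + m) + (g 1 1 - g 0 0)) = 0 := by linear_combination hp - hm
  have h2 : g 1 0 * (p + m) + (g 1 1 - g 0 0) = 0 :=
    (mul_eq_zero.mp key).resolve_left (sub_ne_zero.mpr hne.ne')
  linarith

lemma vieta2 (hp : IsFixedPt g p) (hm : IsFixedPt g m) (hne : m < p) :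
    g 0 1 = -(g 1 0 * (p * m)) := by
  have h1 := vieta1 hp hm hne
  unfold IsFixedPt at hp hm
  linear_combination -hp - p * h1

lemma factorP (hp : IsFixedPt g p) (hm : IsFixedPt g m) (hne : m < p) (z : ℂ) :
    (g 1 0 : ℂ) * z ^ 2 + ((g 1 1 : ℂ) - g 0 0) * z - g 0 1
      = g 1 0 * (z - p) * (z - m) := by
  have h1 := congrArg (Complex.ofReal) (vieta1 hp hm hne)
  have h2 := congrArg (Complex.ofReal) (vieta2 hp hm hne)
  push_cast at h1 h2
  linear_combination (-z) * h1 - h2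

lemma abs_P_ge (hp : IsFixedPt g p) (hm : IsFixedPt g m) (hne : m < p) (z : ℍ) :
    |g 1 0| * ((p - m) * z.im) ≤ norm
      ((g 1 0 : ℂ) * (z : ℂ) ^ 2 + ((g 1 1 : ℂ) - g 0 0) * z - g 0 1) := by
  rw [factorP hp hm hne, mul_assoc, norm_mul, Complex.norm_real, Real.norm_eq_abs]
  have key : (p - m) * z.im ≤ norm (((z : ℂ) - p) * ((z : ℂ) - m)) := by
    have h1 : (p - m) * z.im = (((z : ℂ) - p) * (starRingEnd ℂ) ((z : ℂ) - m)).im := by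
      simp only [Complex.mul_im, Complex.sub_re, Complex.sub_im, Complex.conj_re,
        Complex.conj_im, _root_.map_sub, Complex.ofReal_re, Complex.ofReal_im,
        UpperHalfPlane.coe_im, UpperHalfPlane.coe_re, Complex.conj_ofReal]
      ring
    calc (p - m) * z.im = (((z : ℂ) - p) * (starRingEnd ℂ) ((z : ℂ) - m)).im := h1
      _ ≤ |(((z : ℂ) - p) * (starRingEnd ℂ) ((z : ℂ) - m)).im| := le_abs_self _
      _ ≤ norm (((z : ℂ) - p) * (starRingEnd ℂ) ((z : ℂ) - m)) := Complex.abs_im_le_norm _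
      _ = norm (((z : ℂ) - p) * ((z : ℂ) - m)) := by
          rw [norm_mul, norm_mul, Complex.norm_conj]
  exact mul_le_mul_of_nonneg_left key (abs_nonneg _)

lemma transLength_formula (hp : IsFixedPt g p) (hm : IsFixedPt g m) (hne : m < p) :
    transLength g = 2 * Real.arsinh (|g 1 0| * (p - m) / 2) := by
  have hr : (0:ℝ) < (p - m) / 2 := by linarith
  set z₀ : ℍ := mkPt ((p + m) / 2) ((p - m) / 2) hr with hz₀
  have hre : (z₀ : ℂ).re = (p + m) / 2 := rfl
  have him : (z₀ : ℂ).im = (p - m) / 2 := rfl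
  have him0 : z₀.im = (p - m) / 2 := rfl
  apply le_antisymm
  · have hb : BddBelow (Set.range fun z : ℍ => dist z (g • z)) := by
      refine ⟨0, ?_⟩
      rintro x ⟨z, rfl⟩
      exact dist_nonneg
    refine le_trans (ciInf_le hb z₀) ?_
    rw [dist_smul_sl]
    have hprod : ((z₀ : ℂ) - p) * ((z₀ : ℂ) - m) = ((-2 * ((p - m)/2)^2 : ℝ) : ℂ) := by
      apply Complex.ext
      · simp only [Complex.mul_re, Complex.sub_re, Complex.sub_im, Complex.ofReal_re,
          Complex.ofReal_im, hre, him]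
        ring
      · simp only [Complex.mul_im, Complex.sub_re, Complex.sub_im, Complex.ofReal_re,
          Complex.ofReal_im, hre, him]
        ring
    have harg : norm ((g 1 0 : ℂ) * (z₀ : ℂ) ^ 2 + ((g 1 1 : ℂ) - g 0 0) * (z₀ : ℂ) - g 0 1)
        / (2 * z₀.im) = |g 1 0| * (p - m) / 2 := by
      rw [factorP hp hm hne, mul_assoc, norm_mul, Complex.norm_real, Real.norm_eq_abs, hprod,
        Complex.norm_real, Real.norm_eq_abs, abs_of_nonpos (a := -2 * ((p - m)/2)^2) (by nlinarith), him0]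
      have hpm : p - m ≠ 0 := sub_ne_zero.mpr hne.ne'
      field_simp
    rw [harg]
  · apply le_ciInf
    intro z
    rw [dist_smul_sl]
    have h2 : |g 1 0| * (p - m) / 2 ≤ norm
        ((g 1 0 : ℂ) * (z : ℂ) ^ 2 + ((g 1 1 : ℂ) - g 0 0) * z - g 0 1) / (2 * z.im) := by
      rw [div_le_div_iff₀ (by norm_num) (by positivity)]
      have hge := abs_P_ge hp hm hne z
      nlinarith [z.im_pos]
    gcongr 2 * ?_
    exact Real.arsinh_le_arsinh.mpr h2

lemma sinh_half_transLength (hp : IsFixedPt g p) (hm : IsFixedPt g m) (hne : m < p) :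
    Real.sinh (transLength g / 2) = |g 1 0| * (p - m) / 2 := by
  rw [transLength_formula hp hm hne,
    show (2 : ℝ) * Real.arsinh (|g 1 0| * (p - m) / 2) / 2
      = Real.arsinh (|g 1 0| * (p - m) / 2) by ring,
    Real.sinh_arsinh]

lemma axis_vray_eq (hp : IsFixedPt g p) (hm : IsFixedPt g m) (hne : m < p)
    (hc : g 1 0 ≠ 0) (s : ℝ) (hmem : vray s ∈ Axis g) :
    Real.exp s ^ 2 = -(p * m) := by
  have hd : dist (vray s) (g • vray s) = transLength g := hmem
  rw [dist_smul_sl, transLength_formula hp hm hne] at hd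
  have harg := Real.arsinh_injective (mul_left_cancel₀ (two_ne_zero) hd)
  set z : ℂ := ((vray s : ℍ) : ℂ) with hz
  have hre : z.re = 0 := rfl
  have him : z.im = Real.exp s := rfl
  have him0 : (vray s).im = Real.exp s := rfl
  rw [factorP hp hm hne, mul_assoc, norm_mul, Complex.norm_real, Real.norm_eq_abs, him0] at harg
  have hE : (0:ℝ) < Real.exp s := Real.exp_pos s
  have hcabs : (0:ℝ) < |g 1 0| := abs_pos.mpr hc
  have h3 : norm (z - p) * norm (z - m) = (p - m) * Real.exp s := by
    field_simp at harg
    have h4 : |g 1 0| * (norm (z - p) * norm (z - m) * 2)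
        = |g 1 0| * ((p - m) * Real.exp s * 2) := by rw [← norm_mul, harg]; ring
    have h5 := mul_left_cancel₀ (ne_of_gt hcabs) h4
    linarith [h5]
  have hzp : norm (z - p) ^ 2 = p ^ 2 + Real.exp s ^ 2 := by
    rw [Complex.sq_norm, Complex.normSq_apply, Complex.sub_re, Complex.sub_im, hre, him,
      Complex.ofReal_re, Complex.ofReal_im]
    ring
  have hzm : norm (z - m) ^ 2 = m ^ 2 + Real.exp s ^ 2 := by
    rw [Complex.sq_norm, Complex.normSq_apply, Complex.sub_re, Complex.sub_im, hre, him,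
      Complex.ofReal_re, Complex.ofReal_im]
    ring
  have hsq : (p ^ 2 + Real.exp s ^ 2) * (m ^ 2 + Real.exp s ^ 2)
      = (p - m) ^ 2 * Real.exp s ^ 2 := by
    have h6 := congrArg (fun x : ℝ => x ^ 2) h3
    simp only [mul_pow] at h6
    rw [hzp, hzm] at h6
    linarith [h6]
  have h7 : (Real.exp s ^ 2 + p * m) ^ 2 = 0 := by linear_combination hsq
  have h8 : Real.exp s ^ 2 + p * m = 0 := by
    exact pow_eq_zero_iff (n := 2) (by norm_num) |>.mp h7
  linarith

lemma c_ne_zero_of_att_rep (hatt : IsAttractingFixedPt g p) (hrep : IsRepellingFixedPt g m) :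
    g 1 0 ≠ 0 := by
  intro h0
  have h1 := hatt.2
  have h2 := hrep.2
  rw [h0] at h1 h2
  simp at h1 h2
  linarith

lemma eventually_eq_one_of_discrete {H : Subgroup SL(2, ℝ)} (hd : DiscreteTopology H)
    (u : ℕ → SL(2, ℝ)) (hu : ∀ n, u n ∈ H)
    (hconv : Tendsto (fun n => ((u n : SL(2, ℝ)) : Matrix (Fin 2) (Fin 2) ℝ)) atTop
      (nhds (1 : Matrix (Fin 2) (Fin 2) ℝ))) : ∀ᶠ n in atTop, u n = 1 := by
  have hI : IsInducing (fun g : SL(2, ℝ) => (g : Matrix (Fin 2) (Fin 2) ℝ)) := ⟨rfl⟩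
  have h1 : Tendsto u atTop (nhds (1 : SL(2, ℝ))) := by
    rw [hI.tendsto_nhds_iff]
    exact hconv
  have h2 : Tendsto (fun n => (⟨u n, hu n⟩ : H)) atTop (nhds (⟨1, one_mem H⟩ : H)) := by
    rw [tendsto_subtype_rng]
    exact h1
  rw [nhds_discrete H] at h2
  filter_upwards [tendsto_pure.mp h2] with n hn
  exact congrArg Subtype.val hn

end Helpers


theorem nested_sequence_endpoints_tendsto
    (γ : ℕ → SL(2, ℝ)) (γp γm : ℕ → ℝ) (t : ℕ → ℝ)
    (h : IsNestedSequence γ γp γm t) :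
    Tendsto γp atTop atTop ∧ Tendsto γm atTop atBot ∧ Tendsto t atTop atTop := by
  obtain ⟨hhyp, hdisc, hatt, hrep, hppos, hpmono, hmneg, hmanti, htpos, hmeets, hlanti, hl0⟩ := h
  set a : ℕ → ℝ := fun n => γ n 0 0 with ha
  set b : ℕ → ℝ := fun n => γ n 0 1 with hb
  set c : ℕ → ℝ := fun n => γ n 1 0 with hcdef
  set d : ℕ → ℝ := fun n => γ n 1 1 with hd
  have hc : ∀ n, c n ≠ 0 := fun n => c_ne_zero_of_att_rep (hatt n) (hrep n)
  have hmp : ∀ n, γm n < γp n := fun n => lt_trans (hmneg n) (hppos n)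
  set S : ℕ → ℝ := fun n => Real.sinh (transLength (γ n) / 2) with hSdef
  have hS : ∀ n, S n = |c n| * (γp n - γm n) / 2 :=
    fun n => sinh_half_transLength (hatt n).1 (hrep n).1 (hmp n)
  have hSpos : ∀ n, 0 < S n := by
    intro n
    rw [hS n]
    have h1 : 0 < |c n| := abs_pos.mpr (hc n)
    have h2 : 0 < γp n - γm n := by linarith [hmp n]
    positivity
  have hS0 : Tendsto S atTop (nhds 0) := by
    have hcont : Continuous fun x : ℝ => Real.sinh (x / 2) :=
      Real.continuous_sinh.comp (continuous_id.div_const 2)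
    have h1 := (hcont.tendsto 0).comp hl0
    simpa [hSdef, Function.comp_def] using h1
  have hexp : ∀ n, Real.exp (t n) ^ 2 = γp n * (-γm n) := by
    intro n
    have hmem : vray (t n) ∈ Axis (γ n) := (hmeets n (t n) (htpos n).le).mpr rfl
    have h1 := axis_vray_eq (hatt n).1 (hrep n).1 (hmp n) (hc n) (t n) hmem
    rw [h1]; ring
  set M : ℕ → ℝ := fun n => min (γp n) (-γm n) with hM
  have hMpos : ∀ n, 0 < M n := fun n => lt_min (hppos n) (neg_pos.mpr (hmneg n))
  have hMmono : Monotone M :=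
    Monotone.min hpmono.monotone (fun i j hij => neg_le_neg (hmanti.antitone hij))
  have hMtop : Tendsto M atTop atTop := by
    by_contra hcon
    have hbdd : BddAbove (Set.range M) := by
      by_contra hbd
      exact hcon (tendsto_atTop_atTop_of_monotone' hMmono hbd)
    obtain ⟨C, hCub⟩ := hbdd
    have hCb : ∀ n, M n ≤ C := fun n => hCub (Set.mem_range_self n)
    have hC0 : 0 < C := lt_of_lt_of_le (hMpos 0) (hCb 0)
    set D : ℝ := γp 0 - γm 0 with hDdef
    have hD : (0:ℝ) < D := by have := hmp 0; simp only [hDdef]; linarith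
    have hpge : ∀ n, D ≤ γp n - γm n := by
      intro n
      have h1 := hpmono.monotone (Nat.zero_le n)
      have h2 := hmanti.antitone (Nat.zero_le n)
      simp only [hDdef]
      linarith
    have hdet : ∀ n, a n * d n - b n * c n = 1 := by
      intro n
      have h1 := (γ n).prop
      rw [Matrix.det_fin_two] at h1
      exact h1
    have hv1 : ∀ n, a n - d n = c n * (γp n + γm n) :=
      fun n => vieta1 (hatt n).1 (hrep n).1 (hmp n)
    have hv2 : ∀ n, b n = -(c n * (γp n * γm n)) :=
      fun n => vieta2 (hatt n).1 (hrep n).1 (hmp n)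
    have h2S : ∀ n, |c n| * (γp n - γm n) = 2 * S n := by
      intro n; rw [hS n]; ring
    -- bounds on the entries
    have hcb : ∀ n, |c n| ≤ 2 / D * S n := by
      intro n
      have h1 := h2S n
      have h2 := hpge n
      have h3 := abs_nonneg (c n)
      rw [div_mul_eq_mul_div, le_div_iff₀ hD]
      have h4 := mul_le_mul_of_nonneg_left h2 h3
      linarith [h4, h1]
    have habd : ∀ n, |a n - d n| ≤ 2 * S n := by
      intro n
      rw [hv1 n, abs_mul]
      have h1 : |γp n + γm n| ≤ γp n - γm n := by
        rw [abs_le]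
        constructor <;> [linarith [hppos n]; linarith [hmneg n]]
      calc |c n| * |γp n + γm n| ≤ |c n| * (γp n - γm n) :=
            mul_le_mul_of_nonneg_left h1 (abs_nonneg _)
        _ = 2 * S n := h2S n
    have hbb : ∀ n, |b n| ≤ 2 * C * S n := by
      intro n
      rw [hv2 n, abs_neg, abs_mul, abs_mul]
      have h1 : |γp n| = γp n := abs_of_pos (hppos n)
      have h2 : |γm n| = -γm n := abs_of_neg (hmneg n)
      rw [h1, h2]
      have key : γp n * (-γm n) ≤ (γp n - γm n) * C := by
        have hMC := hCb n
        rcases le_total (γp n) (-γm n) with hle | hle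
        · have hMn : M n = γp n := min_eq_left hle
          rw [hMn] at hMC
          nlinarith [hmneg n, hppos n]
        · have hMn : M n = -γm n := min_eq_right hle
          rw [hMn] at hMC
          nlinarith [hmneg n, hppos n]
      calc |c n| * (γp n * -γm n) ≤ |c n| * ((γp n - γm n) * C) := by
            apply mul_le_mul_of_nonneg_left _ (abs_nonneg _)
            simpa using key
        _ = (|c n| * (γp n - γm n)) * C := by ring
        _ = 2 * S n * C := by rw [h2S n]
        _ = 2 * C * S n := by ring
    have hsumsq : ∀ n, (a n + d n) ^ 2 = 4 + 4 * S n ^ 2 := by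
      intro n
      have e2 : a n * d n = 1 + b n * c n := by linarith [hdet n]
      have e5 : c n ^ 2 * (γp n - γm n) ^ 2 = 4 * S n ^ 2 := by
        have h6 := congrArg (fun x : ℝ => x ^ 2) (h2S n)
        simp only [mul_pow] at h6
        rw [sq_abs] at h6
        linarith [h6]
      calc (a n + d n) ^ 2 = (a n - d n) ^ 2 + 4 * (a n * d n) := by ring
        _ = (c n * (γp n + γm n)) ^ 2 + 4 * (1 + b n * c n) := by rw [hv1 n, e2]
        _ = (c n * (γp n + γm n)) ^ 2 + 4 * (1 + (-(c n * (γp n * γm n))) * c n) := by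
            rw [← hv2 n]
        _ = c n ^ 2 * (γp n - γm n) ^ 2 + 4 := by ring
        _ = 4 * S n ^ 2 + 4 := by rw [e5]
        _ = 4 + 4 * S n ^ 2 := by ring
    have habs_sum : ∀ n, |a n + d n| ≤ 2 + 2 * S n := by
      intro n
      have h1 : (a n + d n) ^ 2 ≤ (2 + 2 * S n) ^ 2 := by
        rw [hsumsq n]
        nlinarith [hSpos n]
      calc |a n + d n| = Real.sqrt ((a n + d n) ^ 2) := (Real.sqrt_sq_eq_abs _).symm
        _ ≤ Real.sqrt ((2 + 2 * S n) ^ 2) := Real.sqrt_le_sqrt h1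
        _ = 2 + 2 * S n := Real.sqrt_sq (by nlinarith [hSpos n])
    -- convergence of the entries
    have hcv_c : Tendsto c atTop (nhds 0) := by
      apply squeeze_zero_norm (a := fun n => 2 / D * S n)
      · intro n
        rw [Real.norm_eq_abs]
        exact hcb n
      · simpa using hS0.const_mul (2 / D)
    have hcv_b : Tendsto b atTop (nhds 0) := by
      apply squeeze_zero_norm (a := fun n => 2 * C * S n)
      · intro n
        rw [Real.norm_eq_abs]
        exact hbb n
      · simpa using hS0.const_mul (2 * C)
    have hcv_ad : Tendsto (fun n => a n - d n) atTop (nhds 0) := by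
      apply squeeze_zero_norm (a := fun n => 2 * S n)
      · intro n
        rw [Real.norm_eq_abs]
        exact habd n
      · simpa using hS0.const_mul 2
    have hcv_sumsq : Tendsto (fun n => (a n + d n) ^ 2) atTop (nhds 4) := by
      have h1 : (fun n => (a n + d n) ^ 2) = fun n => 4 + 4 * S n ^ 2 := funext hsumsq
      rw [h1]
      have h2 : Tendsto (fun n => 4 + 4 * S n ^ 2) atTop (nhds (4 + 4 * (0:ℝ) ^ 2)) :=
        tendsto_const_nhds.add (((hS0.pow 2)).const_mul 4)
      norm_num at h2
      exact h2
    have hcv_prod : Tendsto (fun n => (a n + d n) * (a n - d n)) atTop (nhds 0) := by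
      apply squeeze_zero_norm (a := fun n => (2 + 2 * S n) * (2 * S n))
      · intro n
        rw [Real.norm_eq_abs, abs_mul]
        apply mul_le_mul (habs_sum n) (habd n) (abs_nonneg _) (by nlinarith [hSpos n])
      · have h2 : Tendsto (fun n => (2 + 2 * S n) * (2 * S n)) atTop
            (nhds ((2 + 2 * (0:ℝ)) * (2 * 0))) :=
          (tendsto_const_nhds.add (hS0.const_mul 2)).mul (hS0.const_mul 2)
        norm_num at h2
        exact h2
    have hcv00 : Tendsto (fun n => a n ^ 2 + b n * c n) atTop (nhds 1) := by
      have h1 : (fun n => a n ^ 2 + b n * c n)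
          = fun n => ((a n + d n) ^ 2 + 2 * ((a n + d n) * (a n - d n))
              + (a n - d n) * (a n - d n)) / 4 + b n * c n := by
        funext n; ring
      rw [h1]
      have h2 : Tendsto (fun n => ((a n + d n) ^ 2 + 2 * ((a n + d n) * (a n - d n))
              + (a n - d n) * (a n - d n)) / 4 + b n * c n) atTop
          (nhds ((4 + 2 * 0 + 0 * 0) / 4 + 0 * (0:ℝ))) := by
        exact (((hcv_sumsq.add (hcv_prod.const_mul 2)).add
          (hcv_ad.mul hcv_ad)).div_const 4).add (hcv_b.mul hcv_c)
      norm_num at h2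
      exact h2
    have hcv11 : Tendsto (fun n => c n * b n + d n ^ 2) atTop (nhds 1) := by
      have h1 : (fun n => c n * b n + d n ^ 2)
          = fun n => ((a n + d n) ^ 2 - 2 * ((a n + d n) * (a n - d n))
              + (a n - d n) * (a n - d n)) / 4 + c n * b n := by
        funext n; ring
      rw [h1]
      have h2 : Tendsto (fun n => ((a n + d n) ^ 2 - 2 * ((a n + d n) * (a n - d n))
              + (a n - d n) * (a n - d n)) / 4 + c n * b n) atTop
          (nhds ((4 - 2 * 0 + 0 * 0) / 4 + 0 * (0:ℝ))) := by
        exact (((hcv_sumsq.sub (hcv_prod.const_mul 2)).add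
          (hcv_ad.mul hcv_ad)).div_const 4).add (hcv_c.mul hcv_b)
      norm_num at h2
      exact h2
    have hcv01 : Tendsto (fun n => a n * b n + b n * d n) atTop (nhds 0) := by
      have h1 : (fun n => a n * b n + b n * d n) = fun n => b n * (a n + d n) := by
        funext n; ring
      rw [h1]
      apply squeeze_zero_norm (a := fun n => (2 * C * S n) * (2 + 2 * S n))
      · intro n
        rw [Real.norm_eq_abs, abs_mul]
        apply mul_le_mul (hbb n) (habs_sum n) (abs_nonneg _) (by nlinarith [hSpos n])
      · have h2 : Tendsto (fun n => (2 * C * S n) * (2 + 2 * S n)) atTop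
            (nhds ((2 * C * 0) * (2 + 2 * 0))) :=
          (hS0.const_mul (2 * C)).mul (tendsto_const_nhds.add (hS0.const_mul 2))
        norm_num at h2
        exact h2
    have hcv10 : Tendsto (fun n => c n * a n + d n * c n) atTop (nhds 0) := by
      have h1 : (fun n => c n * a n + d n * c n) = fun n => c n * (a n + d n) := by
        funext n; ring
      rw [h1]
      apply squeeze_zero_norm (a := fun n => (2 / D * S n) * (2 + 2 * S n))
      · intro n
        rw [Real.norm_eq_abs, abs_mul]
        apply mul_le_mul (hcb n) (habs_sum n) (abs_nonneg _) (by nlinarith [hSpos n, div_pos (two_pos (α := ℝ)) hD])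
      · have h2 : Tendsto (fun n => (2 / D * S n) * (2 + 2 * S n)) atTop
            (nhds ((2 / D * 0) * (2 + 2 * 0))) :=
          (hS0.const_mul (2 / D)).mul (tendsto_const_nhds.add (hS0.const_mul 2))
        norm_num at h2
        exact h2
    -- the squares tend to 1 in SL(2, ℝ)
    have hpow : ∀ n, ((γ n ^ 2 : SL(2, ℝ)) : Matrix (Fin 2) (Fin 2) ℝ)
        = ((γ n : Matrix (Fin 2) (Fin 2) ℝ) * (γ n : Matrix (Fin 2) (Fin 2) ℝ)) := by
      intro n
      rw [pow_two]
      exact Matrix.SpecialLinearGroup.coe_mul _ _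
    have hmat : Tendsto (fun n => ((γ n ^ 2 : SL(2, ℝ)) : Matrix (Fin 2) (Fin 2) ℝ)) atTop
        (nhds (1 : Matrix (Fin 2) (Fin 2) ℝ)) := by
      have hentry : ∀ (n : ℕ) (i j : Fin 2),
          ((γ n ^ 2 : SL(2, ℝ)) : Matrix (Fin 2) (Fin 2) ℝ) i j
          = (γ n : Matrix (Fin 2) (Fin 2) ℝ) i 0 * (γ n : Matrix (Fin 2) (Fin 2) ℝ) 0 j
            + (γ n : Matrix (Fin 2) (Fin 2) ℝ) i 1 * (γ n : Matrix (Fin 2) (Fin 2) ℝ) 1 j := by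
        intro n i j
        rw [hpow n, Matrix.mul_apply, Fin.sum_univ_two]
      have key : ∀ i j : Fin 2,
          Tendsto (fun n => ((γ n ^ 2 : SL(2, ℝ)) : Matrix (Fin 2) (Fin 2) ℝ) i j) atTop
            (nhds ((1 : Matrix (Fin 2) (Fin 2) ℝ) i j)) := by
        intro i j
        fin_cases i <;> fin_cases j
        · have hval : (1 : Matrix (Fin 2) (Fin 2) ℝ) 0 0 = 1 := by simp
          rw [show ((⟨0, by norm_num⟩ : Fin 2)) = (0 : Fin 2) from rfl, hval]
          refine Tendsto.congr (fun n => ?_) hcv00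
          rw [hentry n 0 0]
          all_goals simp only [ha, hb, hcdef, hd]
          all_goals ring
        · have hval : (1 : Matrix (Fin 2) (Fin 2) ℝ) 0 1 = 0 := by simp
          rw [show ((⟨0, by norm_num⟩ : Fin 2)) = (0 : Fin 2) from rfl,
            show ((⟨1, by norm_num⟩ : Fin 2)) = (1 : Fin 2) from rfl, hval]
          refine Tendsto.congr (fun n => ?_) hcv01
          rw [hentry n 0 1]
          all_goals simp only [ha, hb, hcdef, hd]
          all_goals ring
        · have hval : (1 : Matrix (Fin 2) (Fin 2) ℝ) 1 0 = 0 := by simp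
          rw [show ((⟨0, by norm_num⟩ : Fin 2)) = (0 : Fin 2) from rfl,
            show ((⟨1, by norm_num⟩ : Fin 2)) = (1 : Fin 2) from rfl, hval]
          refine Tendsto.congr (fun n => ?_) hcv10
          rw [hentry n 1 0]
          all_goals simp only [ha, hb, hcdef, hd]
          all_goals ring
        · have hval : (1 : Matrix (Fin 2) (Fin 2) ℝ) 1 1 = 1 := by simp
          rw [show ((⟨1, by norm_num⟩ : Fin 2)) = (1 : Fin 2) from rfl, hval]
          refine Tendsto.congr (fun n => ?_) hcv11
          rw [hentry n 1 1]
          all_goals simp only [ha, hb, hcdef, hd]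
          all_goals ring
      refine tendsto_pi_nhds.mpr ?_
      intro i
      refine tendsto_pi_nhds.mpr ?_
      intro j
      exact key i j
    -- discreteness contradiction
    have hmemH : ∀ n, γ n ^ 2 ∈ Subgroup.closure (Set.range γ) :=
      fun n => pow_mem (Subgroup.subset_closure (Set.mem_range_self n)) 2
    have hev := eventually_eq_one_of_discrete hdisc (fun n => γ n ^ 2) hmemH hmat
    obtain ⟨n, hn⟩ := hev.exists
    -- but γ n ^ 2 ≠ 1
    have hmeq := congrArg (fun g : SL(2, ℝ) => (g : Matrix (Fin 2) (Fin 2) ℝ)) hn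
    simp only [Matrix.SpecialLinearGroup.coe_one] at hmeq
    rw [hpow n] at hmeq
    have h00 := congrFun (congrFun hmeq 0) 0
    have h11 := congrFun (congrFun hmeq 1) 1
    rw [Matrix.mul_apply, Fin.sum_univ_two] at h00 h11
    simp only [Matrix.one_apply_eq] at h00 h11
    have e2 : a n * d n = 1 + b n * c n := by linarith [hdet n]
    have hsum := hsumsq n
    have hSp := hSpos n
    have h00' : a n * a n + b n * c n = 1 := h00
    have h11' : c n * b n + d n * d n = 1 := h11
    nlinarith [hsum, hSp, h00', h11', e2, mul_pos hSp hSp]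
  -- conclude
  refine ⟨?_, ?_, ?_⟩
  · exact tendsto_atTop_mono (fun n => min_le_left _ _) hMtop
  · have h1 : Tendsto (fun n => -γm n) atTop atTop :=
      tendsto_atTop_mono (fun n => min_le_right _ _) hMtop
    simpa using h1
  · have hlog : Tendsto (fun n => Real.log (M n)) atTop atTop :=
      Real.tendsto_log_atTop.comp hMtop
    apply tendsto_atTop_mono _ hlog
    intro n
    have h1 : M n * M n ≤ γp n * (-γm n) :=
      mul_le_mul (min_le_left _ _) (min_le_right _ _) (hMpos n).le (hppos n).le
    have h2 : M n ^ 2 ≤ Real.exp (t n) ^ 2 := by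
      rw [hexp n]
      nlinarith [h1]
    have h3 : M n ≤ Real.exp (t n) := by
      have h4 := Real.sqrt_le_sqrt h2
      rwa [Real.sqrt_sq (hMpos n).le, Real.sqrt_sq (Real.exp_pos _).le] at h4
    calc Real.log (M n) ≤ Real.log (Real.exp (t n)) :=
          Real.log_le_log (hMpos n) h3
      _ = t n := Real.log_exp _

end BellisFormal
end
end

section
/- Let γ ∈ SL(2,ℝ) be hyperbolic and let x ∈ ℍ. Assume there exists t₀ ≥ 0 such that the point Re(x) + (Im(x)·e^{t₀}) i of ℍ (the point at time t₀ on the vertical geodesic ray from x toward ∞) belongs to Axis(γ). Then |Real.log (Im(γ⁻¹ • x)) − Real.log (Im x)| ≤ ℓ(γ). (This is the bound |B_∞(γ⁻¹x, x)| ≤ ℓ(γ) on the winding time, where B_∞(x,y) = log Im(y) − log Im(x) is the Busemann cocycle based at ∞.) -/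
open UpperHalfPlane Matrix Real Filter Topology
open scoped MatrixGroups

noncomputable section

namespace BellisFormal

/-! ### Auxiliary lemmas for `winding_time_bound` -/

lemma aux_div_im_formula (a b c d : ℝ) (w : ℂ) (hD : (c:ℂ)*w + d ≠ 0) :
    (((a:ℂ)*w+b)/((c:ℂ)*w+d)).im = (a*d - b*c) * w.im / Complex.normSq ((c:ℂ)*w+d) := by
  have hns : Complex.normSq ((c:ℂ)*w + d) ≠ 0 := by
    simpa [Complex.normSq_eq_zero] using hD
  rw [Complex.div_im]
  simp only [Complex.normSq_apply, Complex.add_re, Complex.add_im, Complex.mul_re,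
    Complex.mul_im, Complex.ofReal_re, Complex.ofReal_im] at hns ⊢
  field_simp
  ring

lemma aux_sl_det (g : SL(2,ℝ)) : g 0 0 * g 1 1 - g 0 1 * g 1 0 = 1 := by
  have := g.2
  rw [Matrix.det_fin_two] at this
  exact this

lemma aux_sl_denom_ne (g : SL(2,ℝ)) (w : ℍ) : ((g 1 0 : ℂ) * w + g 1 1) ≠ 0 := by
  intro H
  have him : ((g 1 0 : ℂ) * w + g 1 1).im = g 1 0 * w.im := by
    simp [Complex.add_im, Complex.mul_im]
  rcases eq_or_ne (g 1 0) 0 with hc | hc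
  · have : (g 1 1 : ℂ) = 0 := by simpa [hc] using H
    have h1 : g 1 1 = 0 := by exact_mod_cast this
    have := aux_sl_det g
    rw [hc, h1] at this; norm_num at this
  · have : g 1 0 * w.im = 0 := by rw [← him, H]; simp
    rcases mul_eq_zero.1 this with h | h
    · exact hc h
    · exact (UpperHalfPlane.im_pos w).ne' h

lemma aux_sl_smul_coe (g : SL(2,ℝ)) (w : ℍ) :
    ((g • w : ℍ) : ℂ) = ((g 0 0 : ℂ) * w + g 0 1) / ((g 1 0 : ℂ) * w + g 1 1) := by
  rw [UpperHalfPlane.specialLinearGroup_apply]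
  simp [UpperHalfPlane.coe_mk]

lemma aux_sl_smul_im (g : SL(2,ℝ)) (w : ℍ) :
    (g • w).im = w.im / Complex.normSq ((g 1 0 : ℂ) * w + g 1 1) := by
  have : (g • w).im = (((g 0 0 : ℂ) * w + g 0 1) / ((g 1 0 : ℂ) * w + g 1 1)).im := by
    rw [← UpperHalfPlane.coe_im, aux_sl_smul_coe]
  rw [this, aux_div_im_formula _ _ _ _ _ (aux_sl_denom_ne g w), aux_sl_det, one_mul,
    UpperHalfPlane.coe_im]

/-- The quantity vanishing exactly on the axis. -/
def Qx (g : SL(2,ℝ)) (r y : ℝ) : ℝ :=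
  g 1 0 * r^2 + (g 1 1 - g 0 0) * r - g 0 1 + g 1 0 * y^2

set_option maxHeartbeats 800000 in
lemma aux_dist_smul_eq (g : SL(2,ℝ)) (w : ℍ) :
    dist w (g • w) =
      2 * arsinh (Real.sqrt ((Qx g w.re w.im)^2 + ((g 0 0 + g 1 1)^2 - 4) * w.im^2)
        / (2 * w.im)) := by
  have hD := aux_sl_denom_ne g w
  have hns : (0:ℝ) < Complex.normSq ((g 1 0 : ℂ) * w + g 1 1) :=
    Complex.normSq_pos.2 hD
  rw [UpperHalfPlane.dist_eq]
  congr 1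
  have hsub : (w:ℂ) - ((g • w : ℍ) : ℂ) =
      (((g 1 0 : ℂ) * w + (g 1 1 - g 0 0)) * w - g 0 1) / ((g 1 0 : ℂ) * w + g 1 1) := by
    rw [aux_sl_smul_coe, eq_div_iff hD, sub_mul, div_mul_cancel₀ _ hD]
    ring
  have hdistC : dist (w:ℂ) ((g • w : ℍ) : ℂ)
      = ‖(((g 1 0 : ℂ) * w + (g 1 1 - g 0 0)) * w - g 0 1)‖
        / Real.sqrt (Complex.normSq ((g 1 0 : ℂ) * w + g 1 1)) := by
    rw [dist_eq_norm, hsub, norm_div, Complex.norm_def ((g 1 0 : ℂ) * w + g 1 1)]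
  have hsqrt_im : Real.sqrt (w.im * (g • w).im)
      = w.im / Real.sqrt (Complex.normSq ((g 1 0 : ℂ) * w + g 1 1)) := by
    rw [aux_sl_smul_im]
    rw [show w.im * (w.im / Complex.normSq ((g 1 0 : ℂ) * w + g 1 1))
        = w.im^2 / Complex.normSq ((g 1 0 : ℂ) * w + g 1 1) by ring]
    rw [Real.sqrt_div (sq_nonneg _), Real.sqrt_sq w.im_pos.le]
  have hsn : Real.sqrt (Complex.normSq ((g 1 0 : ℂ) * w + g 1 1)) ≠ 0 :=
    (Real.sqrt_pos.2 hns).ne'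
  have harg : ∀ (A n y : ℝ), n ≠ 0 → A / n / (2 * (y / n)) = A / (2 * y) := by
    intro A n y hn
    rcases eq_or_ne y 0 with rfl | hy
    · simp
    · field_simp
  have hdet := aux_sl_det g
  have hid : Complex.normSq (((g 1 0 : ℂ) * w + (g 1 1 - g 0 0)) * w - g 0 1)
      = (Qx g w.re w.im)^2 + ((g 0 0 + g 1 1)^2 - 4) * w.im^2 := by
    simp only [Complex.normSq_apply, Complex.add_re, Complex.add_im, Complex.mul_re,
      Complex.mul_im, Complex.sub_re, Complex.sub_im, Complex.ofReal_re, Complex.ofReal_im,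
      UpperHalfPlane.coe_re, UpperHalfPlane.coe_im, Qx]
    linear_combination (-4 * w.im^2) * hdet
  rw [hdistC, hsqrt_im, harg _ _ _ hsn, Complex.norm_def, hid]

lemma aux_dist_smul_ge (g : SL(2,ℝ)) (hk : 4 ≤ (g 0 0 + g 1 1)^2) (w : ℍ) :
    2 * arsinh (Real.sqrt ((g 0 0 + g 1 1)^2 - 4) / 2) ≤ dist w (g • w) := by
  rw [aux_dist_smul_eq]
  have hy := w.im_pos
  gcongr 2 * arsinh ?_
  rw [div_le_div_iff₀ (by norm_num) (by positivity)]
  calc Real.sqrt ((g 0 0 + g 1 1)^2 - 4) * (2 * w.im)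
      = 2 * (Real.sqrt ((g 0 0 + g 1 1)^2 - 4) * Real.sqrt (w.im^2)) := by
        rw [Real.sqrt_sq hy.le]; ring
    _ = 2 * Real.sqrt (((g 0 0 + g 1 1)^2 - 4) * w.im^2) := by
        rw [Real.sqrt_mul (by linarith)]
    _ ≤ Real.sqrt ((Qx g w.re w.im)^2 + ((g 0 0 + g 1 1)^2 - 4) * w.im^2) * 2 := by
        rw [mul_comm]
        gcongr
        nlinarith [sq_nonneg (Qx g w.re w.im)]

lemma aux_mk_re (a y : ℝ) (hy : 0 < (Complex.mk a y).im) :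
    (UpperHalfPlane.mk (Complex.mk a y) hy).re = a := rfl

lemma aux_mk_im (a y : ℝ) (hy : 0 < (Complex.mk a y).im) :
    (UpperHalfPlane.mk (Complex.mk a y) hy).im = y := rfl

lemma aux_exists_Qx_zero (g : SL(2,ℝ)) (hk : 4 < (g 0 0 + g 1 1)^2) :
    ∃ w : ℍ, Qx g w.re w.im = 0 := by
  have hdet := aux_sl_det g
  rcases eq_or_ne (g 1 0) 0 with hc | hc
  · have had : g 0 0 * g 1 1 = 1 := by rw [hc] at hdet; linarith
    have hne : g 1 1 - g 0 0 ≠ 0 := by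
      intro h
      have : g 0 0 = g 1 1 := by linarith
      nlinarith [hk, had]
    refine ⟨UpperHalfPlane.mk (Complex.mk (g 0 1 / (g 1 1 - g 0 0)) 1) one_pos, ?_⟩
    rw [Qx, aux_mk_re, aux_mk_im, hc]
    field_simp
    ring
  · have hc2 : (0:ℝ) < g 1 0 ^ 2 := by positivity
    have hs : (Real.sqrt ((g 0 0 + g 1 1)^2 - 4))^2 = (g 0 0 + g 1 1)^2 - 4 :=
      Real.sq_sqrt (by linarith)
    have habs : |g 1 0| ≠ 0 := abs_ne_zero.2 hc
    refine ⟨UpperHalfPlane.mk (Complex.mk ((g 0 0 - g 1 1) / (2 * g 1 0))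
      (Real.sqrt ((g 0 0 + g 1 1)^2 - 4) / (2 * |g 1 0|)))
      (show (0:ℝ) < Real.sqrt ((g 0 0 + g 1 1)^2 - 4) / (2 * |g 1 0|) from
        div_pos (Real.sqrt_pos.2 (by linarith)) (by positivity)), ?_⟩
    rw [Qx, aux_mk_re, aux_mk_im]
    rw [div_pow, div_pow, hs]
    rw [show (2 * |g 1 0|)^2 = 4 * g 1 0^2 by rw [mul_pow, sq_abs]; norm_num]
    have : (g 1 0 : ℝ) * ((g 0 0 - g 1 1)^2/(2 * g 1 0)^2)
        + (g 1 1 - g 0 0) * ((g 0 0 - g 1 1)/(2 * g 1 0)) - g 0 1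
        + g 1 0 * (((g 0 0 + g 1 1)^2 - 4) / (4 * g 1 0^2))
        = (g 0 0 * g 1 1 - g 0 1 * g 1 0 - 1) / g 1 0 := by
      field_simp
      ring
    rw [this, hdet]
    norm_num

lemma aux_transLength_eq (g : SL(2,ℝ)) (hk : 4 < (g 0 0 + g 1 1)^2) :
    transLength g = 2 * arsinh (Real.sqrt ((g 0 0 + g 1 1)^2 - 4) / 2) := by
  obtain ⟨w, hw⟩ := aux_exists_Qx_zero g hk
  refine le_antisymm ?_ (le_ciInf (aux_dist_smul_ge g hk.le))
  have : dist w (g • w) = 2 * arsinh (Real.sqrt ((g 0 0 + g 1 1)^2 - 4) / 2) := by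
    rw [aux_dist_smul_eq, hw]
    congr 2
    rw [zero_pow (by norm_num), zero_add, Real.sqrt_mul (by linarith), Real.sqrt_sq w.im_pos.le]
    rw [div_eq_div_iff (by positivity) (by norm_num)]
    ring
  exact this ▸ ciInf_le ⟨0, fun _ ⟨z, hz⟩ => hz ▸ dist_nonneg⟩ w

lemma aux_axis_Qx_zero (g : SL(2,ℝ)) (hk : 4 < (g 0 0 + g 1 1)^2) (z : ℍ)
    (hz : dist z (g • z) = transLength g) : Qx g z.re z.im = 0 := by
  rw [aux_transLength_eq g hk, aux_dist_smul_eq] at hz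
  have hy := z.im_pos
  have h1 : Real.sqrt ((Qx g z.re z.im)^2 + ((g 0 0 + g 1 1)^2 - 4) * z.im^2) / (2 * z.im)
      = Real.sqrt ((g 0 0 + g 1 1)^2 - 4) / 2 :=
    Real.arsinh_injective (by linarith)
  have h2 : Real.sqrt ((Qx g z.re z.im)^2 + ((g 0 0 + g 1 1)^2 - 4) * z.im^2)
      = Real.sqrt (((g 0 0 + g 1 1)^2 - 4) * z.im^2) := by
    rw [Real.sqrt_mul (by linarith), Real.sqrt_sq hy.le]
    rw [div_eq_div_iff (by positivity) (by norm_num)] at h1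
    linarith [h1]
  have hk0 : (0:ℝ) ≤ (g 0 0 + g 1 1)^2 - 4 := by linarith
  have h3 : (Qx g z.re z.im)^2 + ((g 0 0 + g 1 1)^2 - 4) * z.im^2
      = ((g 0 0 + g 1 1)^2 - 4) * z.im^2 := by
    have h4 := congrArg (fun t => t^2) h2
    simpa [Real.sq_sqrt (add_nonneg (sq_nonneg _) (mul_nonneg hk0 (sq_nonneg _))),
      Real.sq_sqrt (mul_nonneg hk0 (sq_nonneg _))] using h4
  have : (Qx g z.re z.im)^2 = 0 := by linarith
  exact pow_eq_zero_iff (by norm_num) |>.1 this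

lemma aux_Lbounds (T L u : ℝ) (hk : 4 < T^2) (h1 : u^2 ≤ L) (h2 : L ≤ u*T - 1) :
    ((|T| - Real.sqrt (T^2-4))/2)^2 ≤ L ∧ L ≤ ((|T| + Real.sqrt (T^2-4))/2)^2 := by
  set s := Real.sqrt (T^2 - 4) with hs
  have hs0 : 0 ≤ s := Real.sqrt_nonneg _
  have hs2 : s^2 = T^2 - 4 := Real.sq_sqrt (by linarith)
  set t := |T| with ht
  have ht2 : t^2 = T^2 := sq_abs T
  have ht2' : 2 < t := by nlinarith [abs_nonneg T]
  have huT : u * T ≤ |u| * t := by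
    calc u * T ≤ |u * T| := le_abs_self _
      _ = |u| * t := by rw [abs_mul]
  have step1 : u^2 - |u| * t + 1 ≤ 0 := by nlinarith [h1, h2, huT, sq_abs u]
  have habs2 : (2 * |u| - t)^2 ≤ s^2 := by nlinarith [step1, sq_abs u]
  have step2 : |u| ≤ (t + s)/2 := by nlinarith [habs2, abs_nonneg u]
  have step4 : (t - s)/2 ≤ |u| := by nlinarith [habs2, abs_nonneg u]
  constructor
  · nlinarith [h1, step4, sq_abs u, abs_nonneg u]
  · nlinarith [h2, step2, huT, abs_nonneg u]

lemma aux_log_bound (T L : ℝ) (hk : 4 < T^2)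
    (hlo : ((|T| - Real.sqrt (T^2-4))/2)^2 ≤ L)
    (hup : L ≤ ((|T| + Real.sqrt (T^2-4))/2)^2) :
    |Real.log L| ≤ 2 * arsinh (Real.sqrt (T^2-4) / 2) := by
  set s := Real.sqrt (T^2 - 4) with hs
  have hs0 : 0 ≤ s := Real.sqrt_nonneg _
  have hs2 : s^2 = T^2 - 4 := Real.sq_sqrt (by linarith)
  set t := |T| with ht
  have ht2 : t^2 = T^2 := sq_abs T
  have ht2' : 2 < t := by nlinarith [abs_nonneg T]
  have hts : s < t := by nlinarith
  have hE' : 0 < (t - s)/2 := by linarith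
  have hE : 0 < (t + s)/2 := by linarith
  have hmul : ((t + s)/2) * ((t - s)/2) = 1 := by nlinarith
  have hL0 : 0 < L := lt_of_lt_of_le (by positivity) hlo
  have hexp : Real.exp (arsinh (s/2)) = (t + s)/2 := by
    rw [Real.exp_arsinh]
    have h14 : 1 + (s/2)^2 = (t/2)^2 := by nlinarith
    rw [h14, Real.sqrt_sq (by linarith)]
    ring
  have hlogE : Real.log ((t + s)/2) = arsinh (s/2) := by
    rw [← hexp, Real.log_exp]
  have hinv : (t - s)/2 = ((t + s)/2)⁻¹ := by
    field_simp
    nlinarith [hmul]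
  rw [abs_le]
  constructor
  · have : Real.log (((t - s)/2)^2) ≤ Real.log L := Real.log_le_log (by positivity) hlo
    rw [Real.log_pow, hinv, Real.log_inv, hlogE] at this
    push_cast at this
    linarith
  · have : Real.log L ≤ Real.log (((t + s)/2)^2) := Real.log_le_log hL0 hup
    rw [Real.log_pow, hlogE] at this
    push_cast at this
    linarith


theorem winding_time_bound
    (γ : SL(2, ℝ)) (hγ : IsHyperbolic γ) (x : ℍ)
    (h : ∃ t₀ : ℝ, 0 ≤ t₀ ∧
      mkPt x.re (x.im * Real.exp t₀) (mul_pos x.im_pos (Real.exp_pos t₀)) ∈ Axis γ) :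
    |Real.log ((γ⁻¹ • x).im) - Real.log x.im| ≤ transLength γ := by
  obtain ⟨t₀, ht₀, hax⟩ := h
  have hdet := aux_sl_det γ
  have hk : 4 < (γ 0 0 + γ 1 1)^2 := by
    have htr : |γ 0 0 + γ 1 1| = |Matrix.trace (γ : Matrix (Fin 2) (Fin 2) ℝ)| := by
      rw [Matrix.trace_fin_two]
    have h2 : 2 < |γ 0 0 + γ 1 1| := htr ▸ hγ
    nlinarith [sq_abs (γ 0 0 + γ 1 1), abs_nonneg (γ 0 0 + γ 1 1)]
  have hy0 : 0 < x.im := x.im_pos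
  have hyY : x.im ≤ x.im * Real.exp t₀ := by
    nlinarith [Real.exp_pos t₀, Real.one_le_exp ht₀]
  have hQ : Qx γ x.re (x.im * Real.exp t₀) = 0 :=
    aux_axis_Qx_zero γ hk (mkPt x.re (x.im * Real.exp t₀)
      (mul_pos x.im_pos (Real.exp_pos t₀))) hax
  have hQ' : γ 1 0 * x.re^2 + (γ 1 1 - γ 0 0) * x.re - γ 0 1
      + γ 1 0 * (x.im * Real.exp t₀)^2 = 0 := hQ
  have h1 : (γ 0 0 - γ 1 0 * x.re)^2
      ≤ (γ 0 0 - γ 1 0 * x.re)^2 + (γ 1 0 * x.im)^2 := by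
    nlinarith [sq_nonneg (γ 1 0 * x.im)]
  have hyy2 : (γ 1 0 * x.im)^2 ≤ (γ 1 0 * (x.im * Real.exp t₀))^2 := by
    have hy2 : x.im^2 ≤ (x.im * Real.exp t₀)^2 := by nlinarith
    nlinarith [sq_nonneg (γ 1 0), mul_le_mul_of_nonneg_left hy2 (sq_nonneg (γ 1 0))]
  have hkey : (γ 0 0 - γ  1 0 * x.re)^2 + (γ 1 0 * (x.im * Real.exp t₀))^2
      = (γ 0 0 - γ 1 0 * x.re) * (γ 0 0 + γ 1 1) - 1 := by
    linear_combination (γ 1 0 : ℝ) * hQ' + (-1 : ℝ) * hdet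
  have h2 : (γ 0 0 - γ 1 0 * x.re)^2 + (γ 1 0 * x.im)^2
      ≤ (γ 0 0 - γ 1 0 * x.re) * (γ 0 0 + γ 1 1) - 1 := by
    rw [← hkey]
    linarith [hyy2]
  obtain ⟨hlo, hup⟩ := aux_Lbounds (γ 0 0 + γ 1 1)
    ((γ 0 0 - γ 1 0 * x.re)^2 + (γ 1 0 * x.im)^2) (γ 0 0 - γ 1 0 * x.re) hk h1 h2
  have hlog := aux_log_bound (γ 0 0 + γ 1 1)
    ((γ 0 0 - γ 1 0 * x.re)^2 + (γ 1 0 * x.im)^2) hk hlo hup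
  -- compute the imaginary part of γ⁻¹ • x
  have hinv10 : (γ⁻¹ : SL(2,ℝ)) 1 0 = -γ 1 0 := by
    rw [Matrix.SpecialLinearGroup.SL2_inv_expl]
    rfl
  have hinv11 : (γ⁻¹ : SL(2,ℝ)) 1 1 = γ 0 0 := by
    rw [Matrix.SpecialLinearGroup.SL2_inv_expl]
    rfl
  have hL0 : 0 < (γ 0 0 - γ 1 0 * x.re)^2 + (γ 1 0 * x.im)^2 := by
    have hts : Real.sqrt ((γ 0 0 + γ 1 1)^2-4) < |γ 0 0 + γ 1 1| := by
      nlinarith [Real.sq_sqrt (show (0:ℝ) ≤ (γ 0 0 + γ 1 1)^2-4 by linarith),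
        Real.sqrt_nonneg ((γ 0 0 + γ 1 1)^2-4), abs_nonneg (γ 0 0 + γ 1 1),
        sq_abs (γ 0 0 + γ 1 1)]
    refine lt_of_lt_of_le ?_ hlo
    have : 0 < (|γ 0 0 + γ 1 1| - Real.sqrt ((γ 0 0 + γ 1 1)^2-4))/2 := by linarith
    positivity
  have him : (γ⁻¹ • x).im
      = x.im / ((γ 0 0 - γ 1 0 * x.re)^2 + (γ 1 0 * x.im)^2) := by
    rw [aux_sl_smul_im γ⁻¹ x, hinv10, hinv11]
    congr 1
    simp only [Complex.normSq_apply, Complex.add_re, Complex.add_im, Complex.mul_re,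
      Complex.mul_im, Complex.ofReal_re, Complex.ofReal_im, Complex.ofReal_neg,
      Complex.neg_re, Complex.neg_im, UpperHalfPlane.coe_re, UpperHalfPlane.coe_im]
    ring
  have hlogim : Real.log ((γ⁻¹ • x).im) - Real.log x.im
      = - Real.log ((γ 0 0 - γ 1 0 * x.re)^2 + (γ 1 0 * x.im)^2) := by
    rw [him, Real.log_div hy0.ne' hL0.ne']
    ring
  rw [hlogim, abs_neg]
  rw [aux_transLength_eq γ hk]
  exact hlog


end BellisFormal
end
end

section
/- Let γ ∈ SL(2,ℝ) be hyperbolic and let z ∈ ℍ. If there exists w ∈ Axis(γ) with dist(z, w) ≤ 1, then dist(z, γ • z) ≤ 2 ℓ(γ). -/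
open UpperHalfPlane Matrix Real Filter Topology
open scoped MatrixGroups

noncomputable section

namespace BellisFormal

/-! ### Auxiliary lemmas for `displacement_near_axis` -/

section Aux

lemma aux_smul_coe (g : SL(2,ℝ)) (z : ℍ) :
    ((g • z : ℍ) : ℂ) = (g 0 0 * z + g 0 1)/(g 1 0 * z + g 1 1) := by
  rw [UpperHalfPlane.specialLinearGroup_apply]
  simp

lemma aux_neg_smul (g : SL(2,ℝ)) (z : ℍ) : (-g) • z = g • z := by
  apply UpperHalfPlane.ext
  rw [aux_smul_coe, aux_smul_coe]
  have e : ∀ i j, ((-g) i j : ℝ) = -(g i j) := by intro i j; simp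
  simp only [e]
  push_cast
  rw [show (-(g 0 0 :ℂ)) * z + (-(g 0 1:ℂ)) = -((g 0 0:ℂ) * z + g 0 1) by ring,
      show (-(g 1 0 :ℂ)) * z + (-(g 1 1:ℂ)) = -((g 1 0:ℂ) * z + g 1 1) by ring,
      neg_div_neg_eq]

lemma aux_A_smul_coe (l : ℝ) (z : ℍ) : ((A l • z : ℍ) : ℂ) = (Real.exp l : ℝ) * z := by
  rw [aux_smul_coe]
  rw [show (A l) 0 0 = Real.exp (l/2) from rfl, show (A l) 0 1 = 0 from rfl,
      show (A l) 1 0 = 0 from rfl, show (A l) 1 1 = Real.exp (-(l/2)) from rfl]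
  have h : ((Real.exp (-(l/2)) : ℝ) : ℂ) ≠ 0 := by simp [Real.exp_ne_zero]
  rw [div_eq_iff (by simpa using h)]
  push_cast
  simp only [zero_mul, zero_add, add_zero]
  rw [mul_comm (Complex.exp ↑l) (z:ℂ), mul_assoc, ← Complex.exp_add,
    show ((l:ℂ) + -(↑l/2)) = (l:ℂ)/2 by ring]
  ring

lemma aux_A_smul_im (l : ℝ) (z : ℍ) : (A l • z : ℍ).im = Real.exp l * z.im := by
  have h1 := aux_A_smul_coe l z
  have h2 : (A l • z : ℍ).im = ((A l • z : ℍ) : ℂ).im := rfl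
  rw [h2, h1, Complex.mul_im]
  simp [← Complex.ofReal_exp]

lemma aux_dist_A (l : ℝ) (hl : 0 ≤ l) (z : ℍ) :
    dist z (A l • z : ℍ) = 2 * arsinh (‖(z:ℂ)‖ / z.im * Real.sinh (l/2)) := by
  rw [UpperHalfPlane.dist_eq]
  congr 1
  rw [Complex.dist_eq, aux_A_smul_coe, aux_A_smul_im]
  set E := Real.exp (l/2) with hE
  have hEpos : 0 < E := Real.exp_pos _
  have hEl : Real.exp l = E^2 := by rw [hE, sq, ← Real.exp_add]; norm_num
  have h1 : ‖(z:ℂ) - (Real.exp l : ℝ) * z‖ = ‖(z:ℂ)‖ * (E^2 - 1) := by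
    rw [show ((z:ℂ) - (Real.exp l : ℝ) * z) = -(((Real.exp l - 1 : ℝ) : ℂ) * z) by push_cast; ring]
    rw [norm_neg, norm_mul, Complex.norm_real, Real.norm_eq_abs,
      abs_of_nonneg (by nlinarith [Real.one_le_exp hl]), hEl]
    ring
  have h2 : √(z.im * (Real.exp l * z.im)) = z.im * E := by
    rw [hEl, show z.im * (E^2 * z.im) = (z.im * E)^2 by ring]
    exact Real.sqrt_sq (by positivity)
  rw [h1, h2, Real.sinh_eq, Real.exp_neg, ← hE]
  have h3 : z.im ≠ 0 := ne_of_gt z.im_pos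
  field_simp

lemma aux_one_le_quot (z : ℍ) : 1 ≤ ‖(z:ℂ)‖ / z.im := by
  rw [le_div_iff₀ z.im_pos, one_mul]
  calc z.im ≤ |(z:ℂ).im| := le_abs_self _
    _ ≤ ‖(z:ℂ)‖ := Complex.abs_im_le_norm _

lemma aux_dist_A_ge (l : ℝ) (hl : 0 ≤ l) (z : ℍ) : l ≤ dist z (A l • z : ℍ) := by
  have hsh : (0:ℝ) ≤ Real.sinh (l/2) := by
    rw [← Real.sinh_zero]
    exact Real.sinh_le_sinh.2 (by linarith)
  rw [aux_dist_A l hl]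
  have h1 : Real.sinh (l/2) ≤ ‖(z:ℂ)‖ / z.im * Real.sinh (l/2) := by
    nlinarith [aux_one_le_quot z]
  have hl2 : l = 2 * arsinh (Real.sinh (l/2)) := by rw [Real.arsinh_sinh]; ring
  conv_lhs => rw [hl2]
  gcongr

lemma aux_dist_A_I (l : ℝ) (hl : 0 ≤ l) : dist (UpperHalfPlane.I) (A l • UpperHalfPlane.I : ℍ) = l := by
  rw [aux_dist_A l hl]
  have h0 : ‖((UpperHalfPlane.I : ℍ) : ℂ)‖ / (UpperHalfPlane.I : ℍ).im = 1 := by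
    simp [UpperHalfPlane.I]
  rw [h0, one_mul, Real.arsinh_sinh]
  ring

lemma aux_axis_abs (l : ℝ) (hl : 0 < l) (w : ℍ)
    (hw : dist w (A l • w : ℍ) = l) : ‖(w:ℂ)‖ = w.im := by
  rw [aux_dist_A l hl.le] at hw
  have hs : 0 < Real.sinh (l/2) := by
    rw [← Real.sinh_zero]
    exact Real.sinh_lt_sinh.2 (by linarith)
  have h2 : arsinh (‖(w:ℂ)‖ / w.im * Real.sinh (l/2)) = arsinh (Real.sinh (l/2)) := by
    rw [Real.arsinh_sinh]; linarith
  have h3 := Real.arsinh_injective h2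
  have him := w.im_pos.ne'
  field_simp at h3
  have h5 : ‖(w:ℂ)‖ * Real.sinh (l/2) = w.im * Real.sinh (l/2) := by rw [h3]
  exact mul_right_cancel₀ hs.ne' h5

lemma aux_cosh_one_le_two : Real.cosh 1 ≤ 2 := by
  rw [Real.cosh_eq]
  have h1 : Real.exp 1 < 2.7182818286 := Real.exp_one_lt_d9
  have h2 : Real.exp (-1) ≤ 1 := by
    rw [Real.exp_le_one_iff]; norm_num
  nlinarith

lemma aux_near_axis_abs (z w : ℍ) (hw : ‖(w:ℂ)‖ = w.im) (hd : dist z w ≤ 1) :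
    ‖(z:ℂ)‖ ≤ 2 * z.im := by
  have hre : (w : ℂ).re = 0 := by
    have h1 : (w:ℂ).re^2 + (w:ℂ).im^2 = (‖(w:ℂ)‖)^2 := by
      rw [Complex.sq_norm, Complex.normSq_apply]; ring
    have h0 : (w:ℂ).im = w.im := rfl
    rw [h0, hw] at h1
    have : (w:ℂ).re^2 = 0 := by linarith
    exact pow_eq_zero_iff (n := 2) (by norm_num) |>.1 this
  have hy := z.im_pos
  have hs := w.im_pos
  have hcosh : ‖(z:ℂ)‖ / z.im ≤ Real.cosh (dist z w) := by
    rw [UpperHalfPlane.cosh_dist]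
    have hD : (dist (z:ℂ) (w:ℂ))^2 = (z:ℂ).re^2 + (z.im - w.im)^2 := by
      rw [Complex.dist_eq, Complex.sq_norm, Complex.normSq_apply]
      simp only [Complex.sub_re, Complex.sub_im, hre, sub_zero]
      have h0 : (z:ℂ).im - (w:ℂ).im = z.im - w.im := rfl
      rw [h0]; ring
    rw [hD]
    have habs : (‖(z:ℂ)‖)^2 = (z:ℂ).re^2 + z.im^2 := by
      rw [Complex.sq_norm, Complex.normSq_apply]
      have h0 : (z:ℂ).im = z.im := rfl
      rw [h0]; ring
    set Q := ((z:ℂ).re^2 + (z.im - w.im)^2) / (2 * z.im * w.im) with hQdef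
    have hQ : Q * (2 * z.im * w.im) = (z:ℂ).re^2 + (z.im - w.im)^2 := by
      rw [hQdef]; field_simp
    rw [div_le_iff₀ hy]
    have hnn : (0:ℝ) ≤ ‖(z:ℂ)‖ := norm_nonneg _
    nlinarith [sq_nonneg (‖(z:ℂ)‖ - w.im), habs, hQ, mul_pos hy hs]
  have h2 : Real.cosh (dist z w) ≤ Real.cosh 1 := by
    rw [Real.cosh_le_cosh, abs_of_nonneg dist_nonneg]
    norm_num
    exact hd
  have h3 : ‖(z:ℂ)‖ / z.im ≤ 2 := le_trans hcosh (le_trans h2 aux_cosh_one_le_two)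
  rw [div_le_iff₀ hy] at h3
  linarith

lemma aux_detg (γ : SL(2,ℝ)) : γ 0 0 * γ 1 1 - γ 0 1 * γ 1 0 = 1 := by
  have := γ.property
  rw [Matrix.det_fin_two] at this
  exact this

lemma aux_alg_conj (a b c d lam : ℝ) (hdet : a * d - b * c = 1)
    (hc : c ≠ 0) (hr : 2*lam - (a+d) ≠ 0) (hlamne : lam ≠ 0)
    (hmu : lam * ((a + d) - lam) = 1) :
    Matrix.det !![(lam - d)/(c*(2*lam - (a+d))), lam⁻¹ - d; 1/(2*lam - (a+d)), c] = 1 ∧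
    !![a, b; c, d] * !![(lam - d)/(c*(2*lam - (a+d))), lam⁻¹ - d; 1/(2*lam - (a+d)), c] =
      !![(lam - d)/(c*(2*lam - (a+d))), lam⁻¹ - d; 1/(2*lam - (a+d)), c] * !![lam, 0; 0, lam⁻¹] := by
  have hinv : lam⁻¹ = (a + d) - lam := by
    field_simp
    linear_combination -hmu
  constructor
  · rw [Matrix.det_fin_two_of, hinv]
    have hr' : lam * 2 - d - a ≠ 0 := by contrapose! hr; linarith
    field_simp
    ring_nf
    field_simp [hr']
  · ext i j
    fin_cases i <;> fin_cases j <;>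
      simp [Matrix.mul_apply, Fin.sum_univ_two, Fin.mk_zero, Fin.mk_one]
    · have key1 : a * (lam - d) + b * c = (lam - d) * lam := by
        linear_combination hmu - hdet
      calc a * ((lam - d) / (c * (2 * lam - (a + d)))) + b * (2 * lam - (a + d))⁻¹
          = (a * (lam - d) + b * c) / (c * (2 * lam - (a + d))) := by field_simp
        _ = ((lam - d) * lam) / (c * (2 * lam - (a + d))) := by rw [key1]
        _ = (lam - d) / (c * (2 * lam - (a + d))) * lam := by ring
    · rw [hinv]
      linear_combination hmu - hdet
    · field_simp
      ring
    · ring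

lemma aux_conj_diag_of_c_ne (γ : SL(2,ℝ))
    (ht : 2 < Matrix.trace (γ : Matrix (Fin 2) (Fin 2) ℝ))
    (hc : γ 1 0 ≠ 0) :
    ∃ g : SL(2,ℝ), ∃ lam : ℝ, 1 < lam ∧
      (γ : Matrix (Fin 2) (Fin 2) ℝ) * g = (g : Matrix (Fin 2) (Fin 2) ℝ) * !![lam, 0; 0, lam⁻¹] := by
  have hdet : γ 0 0 * γ 1 1 - γ 0 1 * γ 1 0 = 1 := aux_detg γ
  have htr : 2 < γ 0 0 + γ 1 1 := by rwa [Matrix.trace_fin_two] at ht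
  set a := γ 0 0
  set b := γ 0 1
  set c := γ 1 0
  set d := γ 1 1
  set t := a + d with htdef
  have htpos : (0:ℝ) < t^2 - 4 := by nlinarith
  set r := Real.sqrt (t^2 - 4) with hrdef
  have hr2 : r^2 = t^2 - 4 := Real.sq_sqrt htpos.le
  have hrpos : 0 < r := Real.sqrt_pos.2 htpos
  set lam := (t + r)/2 with hlam
  have hlam1 : 1 < lam := by rw [hlam]; nlinarith
  have hlamne : lam ≠ 0 := by positivity
  have hmu : lam * ((a + d) - lam) = 1 := by rw [hlam, htdef]; nlinarith
  have hrl : 2*lam - (a + d) = r := by rw [hlam, htdef]; ring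
  have hrne : 2*lam - (a+d) ≠ 0 := by rw [hrl]; exact hrpos.ne'
  obtain ⟨hdet1, hcomm⟩ := aux_alg_conj a b c d lam hdet hc hrne hlamne hmu
  refine ⟨⟨!![(lam - d)/(c*(2*lam - (a+d))), lam⁻¹ - d; 1/(2*lam - (a+d)), c], hdet1⟩, lam, hlam1, ?_⟩
  have hγ : (γ : Matrix (Fin 2) (Fin 2) ℝ) = !![a, b; c, d] := Matrix.eta_fin_two _
  rw [hγ]
  exact hcomm

/-- lower triangular unipotent -/
def Lmat (s : ℝ) : SL(2,ℝ) := ⟨!![1,0;s,1], by simp [Matrix.det_fin_two_of]⟩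

lemma aux_L_mul_L (s : ℝ) : (Lmat s : Matrix (Fin 2) (Fin 2) ℝ) * (Lmat (-s)) = 1 := by
  simp [Lmat, Matrix.mul_fin_two]
  exact Matrix.one_fin_two.symm

lemma aux_conj_diag (γ : SL(2,ℝ))
    (ht : 2 < Matrix.trace (γ : Matrix (Fin 2) (Fin 2) ℝ)) :
    ∃ g : SL(2,ℝ), ∃ lam : ℝ, 1 < lam ∧
      (γ : Matrix (Fin 2) (Fin 2) ℝ) * g = (g : Matrix (Fin 2) (Fin 2) ℝ) * !![lam, 0; 0, lam⁻¹] := by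
  have hdet : γ 0 0 * γ 1 1 - γ 0 1 * γ 1 0 = 1 := aux_detg γ
  have htr : 2 < γ 0 0 + γ 1 1 := by rwa [Matrix.trace_fin_two] at ht
  obtain ⟨s, hs⟩ : ∃ s : ℝ, -s^2*(γ 0 1) + s*(γ 0 0 - γ 1 1) + γ 1 0 ≠ 0 := by
    by_contra hcon
    push_neg at hcon
    have h0 := hcon 0
    have h1 := hcon 1
    have h2 := hcon (-1)
    norm_num at h0 h1 h2
    nlinarith [hcon 0, hcon 1, hcon (-1)]
  set γ' : SL(2,ℝ) := Lmat s * γ * Lmat (-s) with hγ'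
  have hγ'm : (γ' : Matrix (Fin 2) (Fin 2) ℝ) =
      !![1,0;s,1] * !![γ 0 0, γ 0 1; γ 1 0, γ 1 1] * !![1,0;-s,1] := by
    simp only [hγ', Matrix.SpecialLinearGroup.coe_mul]
    congr 1
    · congr 1
      exact Matrix.eta_fin_two _
  have hentries : (γ' : Matrix (Fin 2) (Fin 2) ℝ) =
      !![γ 0 0 - s*(γ 0 1), γ 0 1;
         -s^2*(γ 0 1) + s*(γ 0 0 - γ 1 1) + γ 1 0, s*(γ 0 1) + γ 1 1] := by
    rw [hγ'm, Matrix.mul_fin_two, Matrix.mul_fin_two]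
    congr 1 <;> ring_nf
  have htr' : 2 < Matrix.trace (γ' : Matrix (Fin 2) (Fin 2) ℝ) := by
    rw [hentries, Matrix.trace_fin_two]
    simp
    linarith
  have hc' : γ' 1 0 ≠ 0 := by
    show (γ' : Matrix (Fin 2) (Fin 2) ℝ) 1 0 ≠ 0
    rw [hentries]
    simpa using hs
  obtain ⟨g', lam, hlam, heq⟩ := aux_conj_diag_of_c_ne γ' htr' hc'
  refine ⟨Lmat (-s) * g', lam, hlam, ?_⟩
  have hLL' : (Lmat (-s) : Matrix (Fin 2) (Fin 2) ℝ) * (Lmat s) = 1 := by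
    have := aux_L_mul_L (-s)
    simpa using this
  rw [hγ', Matrix.SpecialLinearGroup.coe_mul, Matrix.SpecialLinearGroup.coe_mul] at heq
  simp only [Matrix.SpecialLinearGroup.coe_mul]
  calc (γ : Matrix (Fin 2) (Fin 2) ℝ) * ((Lmat (-s) : Matrix (Fin 2) (Fin 2) ℝ) * g')
      = (Lmat (-s) : Matrix (Fin 2) (Fin 2) ℝ) * (((Lmat s : Matrix (Fin 2) (Fin 2) ℝ) * γ * (Lmat (-s))) * g') := by
        rw [show (Lmat (-s) : Matrix (Fin 2) (Fin 2) ℝ) * (((Lmat s : Matrix (Fin 2) (Fin 2) ℝ) * γ * (Lmat (-s))) * g')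
            = ((Lmat (-s) : Matrix (Fin 2) (Fin 2) ℝ) * (Lmat s)) * ((γ : Matrix (Fin 2) (Fin 2) ℝ) * ((Lmat (-s) : Matrix (Fin 2) (Fin 2) ℝ) * g')) by
          noncomm_ring, hLL', one_mul]
    _ = (Lmat (-s) : Matrix (Fin 2) (Fin 2) ℝ) * ((g' : Matrix (Fin 2) (Fin 2) ℝ) * !![lam, 0; 0, lam⁻¹]) := by rw [heq]
    _ = ((Lmat (-s) : Matrix (Fin 2) (Fin 2) ℝ) * g') * !![lam, 0; 0, lam⁻¹] := by noncomm_ring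

lemma aux_conj_SL (γ : SL(2,ℝ))
    (ht : 2 < Matrix.trace (γ : Matrix (Fin 2) (Fin 2) ℝ)) :
    ∃ g : SL(2,ℝ), ∃ l : ℝ, 0 < l ∧ γ = g * A l * g⁻¹ := by
  obtain ⟨g, lam, hlam, heq⟩ := aux_conj_diag γ ht
  have hlampos : (0:ℝ) < lam := by linarith
  have hlog : 0 < Real.log lam := Real.log_pos hlam
  refine ⟨g, 2 * Real.log lam, by linarith, ?_⟩
  have hA : (A (2 * Real.log lam) : Matrix (Fin 2) (Fin 2) ℝ) = !![lam, 0; 0, lam⁻¹] := by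
    have e1 : Real.exp ((2 * Real.log lam)/2) = lam := by
      rw [show (2 * Real.log lam)/2 = Real.log lam by ring, Real.exp_log hlampos]
    have e2 : Real.exp (-((2 * Real.log lam)/2)) = lam⁻¹ := by
      rw [show (2 * Real.log lam)/2 = Real.log lam by ring, Real.exp_neg, Real.exp_log hlampos]
    show (!![Real.exp ((2*Real.log lam)/2), 0; 0, Real.exp (-((2*Real.log lam)/2))] : Matrix (Fin 2) (Fin 2) ℝ) = _
    rw [e1, e2]
  have hSL : γ * g = g * A (2 * Real.log lam) := by
    apply Subtype.ext
    simp only [Matrix.SpecialLinearGroup.coe_mul, hA]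
    exact heq
  calc γ = γ * g * g⁻¹ := by group
    _ = g * A (2*Real.log lam) * g⁻¹ := by rw [hSL]

lemma aux_conj_action (γ : SL(2,ℝ)) (hγ : IsHyperbolic γ) :
    ∃ g : SL(2,ℝ), ∃ l : ℝ, 0 < l ∧ ∀ z : ℍ, γ • z = g • (A l • (g⁻¹ • z)) := by
  rcases lt_abs.1 hγ with hpos | hneg
  · obtain ⟨g, l, hl, hc⟩ := aux_conj_SL γ hpos
    refine ⟨g, l, hl, fun z => ?_⟩
    rw [hc, mul_smul, mul_smul]
  · have hneg' : 2 < Matrix.trace ((-γ : SL(2,ℝ)) : Matrix (Fin 2) (Fin 2) ℝ) := by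
      rw [Matrix.SpecialLinearGroup.coe_neg, Matrix.trace_neg]
      linarith
    obtain ⟨g, l, hl, hc⟩ := aux_conj_SL (-γ) hneg'
    refine ⟨g, l, hl, fun z => ?_⟩
    rw [show γ • z = (-γ) • z from (aux_neg_smul γ z).symm, hc, mul_smul, mul_smul]

end Aux

theorem displacement_near_axis
    (γ : SL(2, ℝ)) (hγ : IsHyperbolic γ) (z : ℍ)
    (h : ∃ w ∈ Axis γ, dist z w ≤ 1) :
    dist z (γ • z : ℍ) ≤ 2 * transLength γ := by
  obtain ⟨g, l, hl, hact⟩ := aux_conj_action γ hγ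
  have hpt : ∀ x : ℍ, g • (g⁻¹ • x) = x := fun x => by rw [← mul_smul]; simp
  have hdist : ∀ x : ℍ, dist x (γ • x : ℍ) = dist (g⁻¹ • x) (A l • (g⁻¹ • x) : ℍ) := by
    intro x
    have hds := dist_smul g (g⁻¹ • x) (A l • (g⁻¹ • x) : ℍ)
    rw [← hds, hpt, ← hact]
  have hbdd : BddBelow (Set.range fun x : ℍ => dist x (γ • x : ℍ)) :=
    ⟨0, by rintro x ⟨x', rfl⟩; exact dist_nonneg⟩
  have hT : transLength γ = l := by
    have h1 : (⨅ x : ℍ, dist x (γ • x : ℍ)) = l := by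
      apply le_antisymm
      · have h2 : (⨅ x : ℍ, dist x (γ • x : ℍ)) ≤
            dist (g • UpperHalfPlane.I) (γ • (g • UpperHalfPlane.I) : ℍ) := ciInf_le hbdd _
        rw [hdist (g • UpperHalfPlane.I)] at h2
        have e : (g⁻¹ • (g • UpperHalfPlane.I) : ℍ) = UpperHalfPlane.I := by
          rw [← mul_smul]; simp
        rw [e, aux_dist_A_I l hl.le] at h2
        exact h2
      · exact le_ciInf fun x => by rw [hdist x]; exact aux_dist_A_ge l hl.le _
    exact h1
  obtain ⟨w, hw, hdw⟩ := h
  have hw' : dist w (γ • w : ℍ) = transLength γ := hw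
  have hwl : dist (g⁻¹ • w) (A l • (g⁻¹ • w) : ℍ) = l := by rw [← hdist w, hw', hT]
  have habsw := aux_axis_abs l hl _ hwl
  have hdzw : dist (g⁻¹ • z : ℍ) (g⁻¹ • w : ℍ) ≤ 1 := by rw [dist_smul]; exact hdw
  have habsz := aux_near_axis_abs _ _ habsw hdzw
  rw [hdist z, aux_dist_A l hl.le, hT]
  have him := (g⁻¹ • z : ℍ).im_pos
  have hq : ‖((g⁻¹ • z : ℍ) : ℂ)‖ / (g⁻¹ • z : ℍ).im ≤ 2 := by
    rw [div_le_iff₀ him]; linarith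
  have hsh : (0:ℝ) ≤ Real.sinh (l/2) := by
    rw [← Real.sinh_zero]; exact Real.sinh_le_sinh.2 (by linarith)
  have harg : ‖((g⁻¹ • z : ℍ) : ℂ)‖ / (g⁻¹ • z : ℍ).im * Real.sinh (l/2)
      ≤ Real.sinh l := by
    have hcosh := Real.one_le_cosh (l/2)
    have hdbl := Real.sinh_two_mul (l/2)
    rw [show 2*(l/2) = l by ring] at hdbl
    nlinarith
  calc 2 * arsinh (‖((g⁻¹ • z : ℍ) : ℂ)‖ / (g⁻¹ • z : ℍ).im * Real.sinh (l/2))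
      ≤ 2 * arsinh (Real.sinh l) := by gcongr
    _ = 2 * l := by rw [Real.arsinh_sinh]

end BellisFormal
end
end

section
/- Let γ = !![a,b;c,d] ∈ SL(2,ℝ) be hyperbolic with two real fixed points γ⁻ < 0 < γ⁺, let v ∈ SL(2,ℝ) satisfy v • i = i and lim_{t→+∞} v • (eᵗ i) = a/c in ℂ, and let τ := − Real.log (Im (γ⁻¹ • i)). Then the vector g_τ(v) lies on the horocyclic orbit of γ: there exist s ∈ ℝ and ε ∈ {1, −1} such that v * A(τ) = ε • (γ * N(s)). -/
open UpperHalfPlane Matrix Real Filter Topology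
open scoped MatrixGroups

noncomputable section

namespace BellisFormal

private lemma smul_coe' (g : SL(2,ℝ)) (z : ℍ) :
    ((g • z : ℍ) : ℂ) = ((g 0 0 : ℝ) * z + (g 0 1 : ℝ)) / ((g 1 0 : ℝ) * z + (g 1 1 : ℝ)) := by
  rw [UpperHalfPlane.specialLinearGroup_apply]
  simp

private lemma vray_coe (t : ℝ) : ((vray t : ℍ) : ℂ) = (Real.exp t : ℝ) * Complex.I := by
  apply Complex.ext <;>
    simp [vray, UpperHalfPlane.coe, -Complex.ofReal_exp]

theorem winding_lands_on_horocyclic_orbit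
    (γ : SL(2, ℝ)) (hγ : IsHyperbolic γ)
    (xm xp : ℝ) (hfm : IsFixedPt γ xm) (hfp : IsFixedPt γ xp)
    (hm : xm < 0) (hp : 0 < xp) (hc : γ 1 0 ≠ 0)
    (v : SL(2, ℝ)) (hv0 : v • (UpperHalfPlane.I : ℍ) = UpperHalfPlane.I)
    (hvend : Tendsto (fun t : ℝ => ((v • vray t : ℍ) : ℂ)) atTop
      (nhds ((γ 0 0 / γ 1 0 : ℝ) : ℂ)))
    (τ : ℝ) (hτ : τ = - Real.log ((γ⁻¹ • (UpperHalfPlane.I : ℍ)).im)) :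
    ∃ s : ℝ, ∃ ε : SL(2, ℝ), (ε = 1 ∨ ε = -1) ∧ v * A τ = ε * (γ * N s) := by
  classical
  set a : ℝ := γ 0 0 with ha'
  set b : ℝ := γ 0 1 with hb'
  set c : ℝ := γ 1 0 with hc'
  set d : ℝ := γ 1 1 with hd'
  have hdet : a * d - b * c = 1 := by
    have := γ.2
    rw [Matrix.det_fin_two] at this
    exact this
  have hdetv : v 0 0 * v 1 1 - v 0 1 * v 1 0 = 1 := by
    have := v.2
    rw [Matrix.det_fin_two] at this
    exact this
  -- entries of v from hv0
  have hIc : ((UpperHalfPlane.I : ℍ) : ℂ) = Complex.I := rfl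
  have hdenI : ((v 1 0 : ℝ) : ℂ) * Complex.I + ((v 1 1 : ℝ) : ℂ) ≠ 0 := by
    intro h
    rw [Complex.ext_iff] at h
    simp at h
    rw [h.1, h.2] at hdetv
    simp at hdetv
  have h0 := congrArg (fun z : ℍ => (z : ℂ)) hv0
  simp only [smul_coe', hIc] at h0
  rw [div_eq_iff hdenI] at h0
  rw [Complex.ext_iff] at h0
  simp at h0
  obtain ⟨h01, h00⟩ := h0
  -- v 1 0 ≠ 0, via the limit hypothesis
  have hvne : v 1 0 ≠ 0 := by
    intro hz
    have h01' : v 0 1 = 0 := by rw [h01, hz, neg_zero]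
    have hv11 : (v 1 1 : ℝ) ≠ 0 := by
      intro hzz; rw [hzz, h01', hz] at hdetv; simp at hdetv
    have hvv : ∀ t : ℝ, ((v • vray t : ℍ) : ℂ) = (Real.exp t : ℝ) * Complex.I := by
      intro t
      rw [smul_coe', vray_coe, hz, h01', h00]
      have : ((v 1 1 : ℝ) : ℂ) ≠ 0 := by exact_mod_cast hv11
      rw [Complex.ofReal_zero, zero_mul, add_zero, zero_add, mul_div_cancel_left₀ _ this]
    have him := (Complex.continuous_im.tendsto _).comp hvend
    simp only [Function.comp_def, hvv] at him
    simp at him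
    exact not_tendsto_nhds_of_tendsto_atTop Real.tendsto_exp_atTop 0 him
  -- explicit formula for the moving point
  have hvC : ((v 1 0 : ℝ) : ℂ) ≠ 0 := by exact_mod_cast hvne
  have hdetvC : ((v 0 0 : ℝ) : ℂ) * ((v 1 1 : ℝ) : ℂ)
      - ((v 0 1 : ℝ) : ℂ) * ((v 1 0 : ℝ) : ℂ) = 1 := by exact_mod_cast hdetv
  have hdenT : ∀ t : ℝ,
      ((v 1 0 : ℝ) : ℂ) * ((Real.exp t : ℝ) * Complex.I) + ((v 1 1 : ℝ) : ℂ) ≠ 0 := by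
    intro t h
    have him : v 1 0 * Real.exp t = 0 := by
      have := congrArg Complex.im h
      simpa [-Complex.ofReal_exp] using this
    rcases mul_eq_zero.mp him with h' | h'
    · exact hvne h'
    · exact absurd h' (Real.exp_ne_zero t)
  have hFeq : ∀ t : ℝ, ((v • vray t : ℍ) : ℂ)
      = ((v 0 0 : ℝ) : ℂ) / ((v 1 0 : ℝ) : ℂ)
        - (((v 1 0 : ℝ) : ℂ) *
            (((v 1 0 : ℝ) : ℂ) * ((Real.exp t : ℝ) * Complex.I) + ((v 1 1 : ℝ) : ℂ)))⁻¹ := by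
    intro t
    rw [smul_coe', vray_coe]
    set z : ℂ := ((Real.exp t : ℝ) : ℂ) * Complex.I with hz
    have hden : ((v 1 0 : ℝ) : ℂ) * z + ((v 1 1 : ℝ) : ℂ) ≠ 0 := hdenT t
    have hden' : z * ((v 1 0 : ℝ) : ℂ) + ((v 1 1 : ℝ) : ℂ) ≠ 0 := by rw [mul_comm]; exact hden
    field_simp
    linear_combination -hdetvC
  have hlim0 : Tendsto (fun t : ℝ =>
      (((v 1 0 : ℝ) : ℂ) *
        (((v 1 0 : ℝ) : ℂ) * ((Real.exp t : ℝ) * Complex.I) + ((v 1 1 : ℝ) : ℂ)))⁻¹)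
      atTop (nhds 0) := by
    rw [tendsto_zero_iff_norm_tendsto_zero]
    simp only [norm_inv]
    apply Filter.Tendsto.inv_tendsto_atTop
    apply tendsto_atTop_mono
      (f := fun t : ℝ => v 1 0 ^ 2 * Real.exp t)
    · intro t
      have hb : |(((v 1 0 : ℝ) : ℂ) * ((Real.exp t : ℝ) * Complex.I)
          + ((v 1 1 : ℝ) : ℂ)).im| ≤ ‖(((v 1 0 : ℝ) : ℂ) * ((Real.exp t : ℝ) * Complex.I)
          + ((v 1 1 : ℝ) : ℂ))‖ := Complex.abs_im_le_norm _
      have him : (((v 1 0 : ℝ) : ℂ) * ((Real.exp t : ℝ) * Complex.I)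
          + ((v 1 1 : ℝ) : ℂ)).im = v 1 0 * Real.exp t := by
        simp [-Complex.ofReal_exp]
      rw [him] at hb
      calc v 1 0 ^ 2 * Real.exp t = |v 1 0| * |v 1 0 * Real.exp t| := by
            rw [abs_mul, abs_of_pos (Real.exp_pos t), ← sq_abs]; ring
        _ ≤ |v 1 0| * ‖(((v 1 0 : ℝ) : ℂ) * ((Real.exp t : ℝ) * Complex.I)
              + ((v 1 1 : ℝ) : ℂ))‖ := by gcongr
        _ = ‖((v 1 0 : ℝ) : ℂ) * (((v 1 0 : ℝ) : ℂ) * ((Real.exp t : ℝ) * Complex.I)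
              + ((v 1 1 : ℝ) : ℂ))‖ := by rw [norm_mul, Complex.norm_real, Real.norm_eq_abs]
    · exact Real.tendsto_exp_atTop.const_mul_atTop (by positivity)
  have hlim : Tendsto (fun t : ℝ => ((v • vray t : ℍ) : ℂ)) atTop
      (nhds (((v 0 0 : ℝ) : ℂ) / ((v 1 0 : ℝ) : ℂ))) := by
    simp only [hFeq]
    simpa using tendsto_const_nhds.sub hlim0
  have huniq := tendsto_nhds_unique hvend hlim
  have hcC : ((c : ℝ) : ℂ) ≠ 0 := by exact_mod_cast hc
  have hcv : c * v 0 0 = a * v 1 0 := by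
    rw [Complex.ofReal_div, div_eq_div_iff hcC hvC] at huniq
    exact_mod_cast (by linear_combination -huniq :
      ((c : ℝ) : ℂ) * ((v 0 0 : ℝ) : ℂ) = ((a : ℝ) : ℂ) * ((v 1 0 : ℝ) : ℂ))
  -- the value of exp τ
  have hacpos : 0 < a ^ 2 + c ^ 2 := by
    have h1 : 0 < c ^ 2 := by positivity
    nlinarith [sq_nonneg a]
  have hi00 : γ⁻¹ 0 0 = d := by rw [SpecialLinearGroup.SL2_inv_expl]; rfl
  have hi01 : γ⁻¹ 0 1 = -b := by rw [SpecialLinearGroup.SL2_inv_expl]; rfl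
  have hi10 : γ⁻¹ 1 0 = -c := by rw [SpecialLinearGroup.SL2_inv_expl]; rfl
  have hi11 : γ⁻¹ 1 1 = a := by rw [SpecialLinearGroup.SL2_inv_expl]; rfl
  have himI : (γ⁻¹ • (UpperHalfPlane.I : ℍ)).im = 1 / (a ^ 2 + c ^ 2) := by
    rw [← UpperHalfPlane.coe_im, smul_coe', hIc, hi00, hi01, hi10, hi11]
    rw [Complex.div_im]
    have hne : a ^ 2 + c ^ 2 ≠ 0 := ne_of_gt hacpos
    simp [Complex.normSq_apply]
    have hne' : a * a + c * c ≠ 0 := by nlinarith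
    field_simp
    linear_combination hdet
  have hexp : Real.exp τ = a ^ 2 + c ^ 2 := by
    rw [hτ, himI, one_div, Real.log_inv, neg_neg, Real.exp_log hacpos]
  set p := Real.exp (τ / 2) with hp'
  set q := Real.exp (-(τ / 2)) with hq'
  have hpq : p * q = 1 := by rw [hp', hq', ← Real.exp_add]; simp
  have hp2 : p ^ 2 = a ^ 2 + c ^ 2 := by
    rw [hp', sq, ← Real.exp_add, ← hexp]
    norm_num
  set eE := c * v 1 0 + a * v 0 0 with heE'
  have hnorm : v 0 0 ^ 2 + v 1 0 ^ 2 = 1 := by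
    linear_combination hdetv + v 1 0 * h01 + v 0 0 * h00
  have he2 : eE ^ 2 = a ^ 2 + c ^ 2 := by
    linear_combination (a ^ 2 + c ^ 2) * hnorm - (c * v 0 0 - a * v 1 0) * hcv
  have hfac : (p - eE) * (p + eE) = 0 := by linear_combination hp2 - he2
  -- the key matrix computation
  have key : ∀ σ : ℝ, σ ^ 2 = 1 → σ * p = eE →
      ((v * A τ : SL(2, ℝ)) : Matrix (Fin 2) (Fin 2) ℝ)
        = σ • (((γ * N (σ * ((-(d * v 1 0) - b * v 0 0) * q)) : SL(2, ℝ))) :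
            Matrix (Fin 2) (Fin 2) ℝ) := by
    intro σ hσ2 hpe
    have hqe : q * eE = σ := by linear_combination σ * hpq - q * hpe
    have ha00 : v 0 0 * eE = a := by linear_combination a * hnorm + v 1 0 * hcv
    have hc10 : v 1 0 * eE = c := by linear_combination c * hnorm - v 0 0 * hcv
    have hw1 : v 0 1 - a * (-(d * v 1 0) - b * v 0 0) = b * eE := by
      linear_combination h01 + v 1 0 * hdet
    have hw2 : v 1 1 - c * (-(d * v 1 0) - b * v 0 0) = d * eE := by
      linear_combination -h00 - v 0 0 * hdet
    change (v : Matrix (Fin 2) (Fin 2) ℝ) * (A τ : Matrix (Fin 2) (Fin 2) ℝ) = σ • ((γ : Matrix (Fin 2) (Fin 2) ℝ) * (N (σ * ((-(d * v 1 0) - b * v 0 0) * q)) : Matrix (Fin 2) (Fin 2) ℝ))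
    ext i j
    fin_cases i <;> fin_cases j <;>
      simp [A, N, Matrix.mul_apply, Fin.sum_univ_two, ← hp', ← hq', ← ha', ← hb', ← hc', ← hd']
    · linear_combination σ * ha00 + σ * v 0 0 * hpe - v 0 0 * p * hσ2
    · linear_combination q * hw1 + b * hqe
        - a * (-(d * v 1 0) - b * v 0 0) * q * hσ2
    · linear_combination σ * hc10 + σ * v 1 0 * hpe - v 1 0 * p * hσ2
    · linear_combination q * hw2 + d * hqe
        - c * (-(d * v 1 0) - b * v 0 0) * q * hσ2
  rcases mul_eq_zero.mp hfac with hpe | hpe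
  · refine ⟨1 * ((-(d * v 1 0) - b * v 0 0) * q), 1, Or.inl rfl, ?_⟩
    have hk := key 1 (by norm_num) (by linear_combination hpe)
    apply Subtype.ext
    simpa using hk
  · refine ⟨(-1) * ((-(d * v 1 0) - b * v 0 0) * q), -1, Or.inr rfl, ?_⟩
    have hk := key (-1) (by norm_num) (by linear_combination -hpe)
    apply Subtype.ext
    simpa using hk


end BellisFormal
end
end

section
/- Let (α_n)_{n≥0} be a nested sequence in SL(2,ℝ) and set β_n := α_0 * α_1 * ⋯ * α_n. Then for every n the (1,0)-entry (β_n)₁₀ is nonzero, the real numbers x_n := (β_n)₀₀ / (β_n)₁₀ (the images of ∞ under the Möbius maps of β_n) are all positive, the sequence (x_n) is strictly decreasing, and (x_n) converges to a limit in ℝ. -/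
open UpperHalfPlane Matrix Real Filter Topology
open scoped MatrixGroups

noncomputable section

namespace BellisFormal

private lemma pos_of_mul_sq {x c : ℝ} (hc : c ≠ 0) (h : 0 < x * c ^ 2) : 0 < x := by
  rcases lt_or_ge 0 x with h1 | h1
  · exact h1
  · nlinarith [sq_nonneg c]

private lemma quot_pos {x y : ℝ} (h : 0 < x * y) : 0 < x / y := by
  rcases mul_pos_iff.mp h with ⟨h1, h2⟩ | ⟨h1, h2⟩
  · exact div_pos h1 h2
  · exact div_pos_of_neg_of_neg h1 h2

private lemma mul_pos_of_quot_pos {x y : ℝ} (h : 0 < x / y) (hy : y ≠ 0) : 0 < x * y := by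
  have h2 : 0 < y ^ 2 := lt_of_le_of_ne (sq_nonneg y) (Ne.symm (pow_ne_zero 2 hy))
  have e : x * y = (x / y) * y ^ 2 := by field_simp
  rw [e]; exact mul_pos h h2

private lemma sl2_det (g : SL(2, ℝ)) : g 0 0 * g 1 1 - g 0 1 * g 1 0 = 1 := by
  have h := g.2
  rw [Matrix.det_fin_two] at h
  exact h

private lemma sl2_mul (g h : SL(2, ℝ)) (i j : Fin 2) :
    (g * h) i j = g i 0 * h 0 j + g i 1 * h 1 j := by
  show ((g : Matrix (Fin 2) (Fin 2) ℝ) * (h : Matrix (Fin 2) (Fin 2) ℝ)) i j = _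
  rw [Matrix.mul_apply, Fin.sum_univ_two]

private lemma elem_core (a b c d p m : ℝ) (hm : m < 0) (hp : 0 < p)
    (hdet : a * d - b * c = 1)
    (hQp : c * p ^ 2 + (d - a) * p - b = 0) (hu2 : 1 < (c * p + d) ^ 2)
    (hQm : c * m ^ 2 + (d - a) * m - b = 0) (hv2 : (c * m + d) ^ 2 < 1) :
    c ≠ 0 ∧ 0 < d * c ∧ (c * p + d) ≠ 0 ∧ a * p + b = (c * p + d) * p ∧ p < a / c ∧
    ∀ x : ℝ, x < 0 → 0 < (a - c * x) * c ∧ (d * x - b) * c < 0 := by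
  have hpm : 0 < p - m := by linarith
  have hc : c ≠ 0 := by
    intro h0
    rw [h0] at hu2 hv2
    simp at hu2 hv2
    nlinarith
  have hc2 : 0 < c ^ 2 := lt_of_le_of_ne (sq_nonneg c) (Ne.symm (pow_ne_zero 2 hc))
  have hu0 : c * p + d ≠ 0 := by
    intro h0; rw [h0] at hu2; norm_num at hu2
  have huv : (c * p + d) * (c * m + d) = 1 := by
    have h0 : ((c * p + d) * (c * m + d) - 1) * (p - m) = 0 := by
      linear_combination (c * m + d) * hQp - (c * p + d) * hQm + (p - m) * hdet
    rcases mul_eq_zero.mp h0 with h1 | h1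
    · linarith
    · linarith
  have hv0 : c * m + d ≠ 0 := by
    intro h0; rw [h0, mul_zero] at huv; norm_num at huv
  have hcu : 0 < c * (c * p + d) := by
    have hid : c * (p - m) * (c * p + d) = (c * p + d) ^ 2 - 1 := by linear_combination -huv
    nlinarith [hid, hu2]
  have hamu : a - c * m = c * p + d := by
    have h1 : (a - c * m) * (c * m + d) = 1 := by linear_combination hdet - c * hQm
    have h2 : (a - c * m - (c * p + d)) * (c * m + d) = 0 := by linear_combination h1 - huv
    rcases mul_eq_zero.mp h2 with h3 | h3
    · linarith
    · exact absurd h3 hv0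
  have hap : a * p + b = (c * p + d) * p := by linear_combination -hQp
  have hcv : 0 < c * (c * m + d) := by
    have h4 : c * (c * m + d) * (c * p + d) ^ 2 = c * (c * p + d) := by
      linear_combination (c * (c * p + d)) * huv
    nlinarith [h4, hcu, sq_nonneg (c * p + d)]
  have hdc : 0 < d * c := by nlinarith [hcv, hc2, hm]
  have h6 : 0 < (a - c * p) * c := by
    have h5 : (a - c * p) * (c * p + d) = 1 := by linear_combination hdet - c * hQp
    have h7 : (a - c * p) * c * (c * p + d) ^ 2 = c * (c * p + d) := by
      linear_combination (c * (c * p + d)) * h5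
    nlinarith [h7, hcu, sq_nonneg (c * p + d)]
  have hwp : p < a / c := by
    have h8 : a / c - p = (a - c * p) / c := by field_simp
    have h9 := quot_pos h6
    linarith
  refine ⟨hc, hdc, hu0, hap, hwp, ?_⟩
  intro x hx
  have hdenx : 0 < (a - c * x) * c := by
    nlinarith [h6, mul_pos hc2 (show (0:ℝ) < p - x by linarith)]
  refine ⟨hdenx, ?_⟩
  rcases le_or_gt x m with hxm | hxm
  · have h9 : d * m - b = m * (c * p + d) := by
      have h9a : d * m - b = m * (a - c * m) := by linear_combination hQm
      rw [hamu] at h9a; exact h9a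
    have h10 : (d * x - b) * c = m * (c * (c * p + d)) + (d * c) * (x - m) := by
      linear_combination c * h9
    have t1 : m * (c * (c * p + d)) < 0 := mul_neg_of_neg_of_pos hm hcu
    have t2 : (d * c) * (x - m) ≤ 0 := by nlinarith [hdc]
    linarith
  · have hs0 : (c * (p + m) - (a - d)) * (p - m) = 0 := by linear_combination hQp - hQm
    have hsum : c * (p + m) = a - d := by
      rcases mul_eq_zero.mp hs0 with h1 | h1
      · linarith
      · linarith
    have hp0 : (c * (p * m) + b) * (p - m) = 0 := by linear_combination m * hQp - p * hQm
    have hprodpm : c * (p * m) = -b := by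
      rcases mul_eq_zero.mp hp0 with h1 | h1
      · linarith
      · linarith
    have h11 : (d * x - b) * c = x * ((a - c * x) * c) + c ^ 2 * ((x - m) * (x - p)) := by
      linear_combination (c * x) * hsum - c * hprodpm
    have t1 : x * ((a - c * x) * c) < 0 := mul_neg_of_neg_of_pos hx hdenx
    have t2 : c ^ 2 * ((x - m) * (x - p)) < 0 :=
      mul_neg_of_pos_of_neg hc2
        (mul_neg_of_pos_of_neg (by linarith) (by linarith))
    linarith

private lemma mat_core (A B C D : ℝ) (hdet : A * D - B * C = 1)
    (h1 : ∀ x : ℝ, 0 ≤ x → 0 < (C * x + D) * C) :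
    (∀ x y : ℝ, 0 ≤ x → x < y → (A * x + B) / (C * x + D) < (A * y + B) / (C * y + D)) ∧
    ∀ x : ℝ, 0 ≤ x → (A * x + B) / (C * x + D) < A / C := by
  have hC : C ≠ 0 := by intro h0; have h2 := h1 0 le_rfl; rw [h0] at h2; simp at h2
  constructor
  · intro x y hx hxy
    have h1x := h1 x hx
    have h1y := h1 y (le_trans hx hxy.le)
    have hxd : C * x + D ≠ 0 := by intro h0; rw [h0] at h1x; simp at h1x
    have hyd : C * y + D ≠ 0 := by intro h0; rw [h0] at h1y; simp at h1y
    have hprod : 0 < (C * x + D) * (C * y + D) := by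
      have h3 : 0 < ((C * x + D) * (C * y + D)) * C ^ 2 := by nlinarith [mul_pos h1x h1y]
      exact pos_of_mul_sq hC h3
    have key : (A * y + B) / (C * y + D) - (A * x + B) / (C * x + D)
        = (y - x) / ((C * x + D) * (C * y + D)) := by
      rw [div_sub_div _ _ hyd hxd, mul_comm (C * y + D) (C * x + D)]
      congr 1
      linear_combination (y - x) * hdet
    have hpos : 0 < (y - x) / ((C * x + D) * (C * y + D)) := div_pos (by linarith) hprod
    linarith
  · intro x hx
    have h1x := h1 x hx
    have hxd : C * x + D ≠ 0 := by intro h0; rw [h0] at h1x; simp at h1x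
    have key2 : A / C - (A * x + B) / (C * x + D) = 1 / ((C * x + D) * C) := by
      rw [div_sub_div _ _ hC hxd, mul_comm C (C * x + D)]
      congr 1
      linear_combination hdet
    have hpos := div_pos one_pos h1x
    linarith

private lemma step_core (A B C D a' b' c' d' p' : ℝ)
    (ih1 : ∀ x : ℝ, 0 ≤ x → 0 < (C * x + D) * C)
    (hp' : 0 < p')
    (hu0' : c' * p' + d' ≠ 0)
    (hap' : a' * p' + b' = (c' * p' + d') * p')
    (hE4' : ∀ x : ℝ, x < 0 → 0 < (a' - c' * x) * c' ∧ (d' * x - b') * c' < 0)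
    (hx2 : 0 < (A * p' + B) / (C * p' + D)) :
    (∀ x : ℝ, 0 ≤ x → 0 < ((C * a' + D * c') * x + (C * b' + D * d')) * (C * a' + D * c')) ∧
    0 < ((A * a' + B * c') * p' + (A * b' + B * d')) / ((C * a' + D * c') * p' + (C * b' + D * d')) := by
  have hC : C ≠ 0 := by intro h0; have h2 := ih1 0 le_rfl; rw [h0] at h2; simp at h2
  have hCD : 0 < D * C := by have h2 := ih1 0 le_rfl; nlinarith [h2]
  have hqneg : -(D / C) < 0 := by have := quot_pos hCD; linarith
  obtain ⟨hden, hnum⟩ := hE4' (-(D / C)) hqneg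
  have hDC : D / C * C = D := div_mul_cancel₀ D hC
  have e1 : ((C * a' + D * c') * c') * C = ((a' - c' * (-(D / C))) * c') * C ^ 2 := by
    linear_combination (-(c' ^ 2 * C)) * hDC
  have e2 : ((C * b' + D * d') * c') * C = (-((d' * (-(D / C)) - b') * c')) * C ^ 2 := by
    linear_combination (-(c' * d' * C)) * hDC
  have hC2 : 0 < C ^ 2 := lt_of_le_of_ne (sq_nonneg C) (Ne.symm (pow_ne_zero 2 hC))
  have hX : 0 < ((C * a' + D * c') * c') * C := by rw [e1]; exact mul_pos hden hC2
  have hY : 0 < ((C * b' + D * d') * c') * C := by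
    rw [e2]; exact mul_pos (by linarith) hC2
  have hC'D' : 0 < (C * a' + D * c') * (C * b' + D * d') := by
    nlinarith [mul_pos hX hY, sq_nonneg (c' * C)]
  constructor
  · intro x hx
    nlinarith [hC'D', mul_nonneg (sq_nonneg (C * a' + D * c')) hx]
  · have f1 : (A * a' + B * c') * p' + (A * b' + B * d') = (c' * p' + d') * (A * p' + B) := by
      linear_combination A * hap'
    have f2 : (C * a' + D * c') * p' + (C * b' + D * d') = (c' * p' + d') * (C * p' + D) := by
      linear_combination C * hap'
    rw [f1, f2, mul_div_mul_left _ _ hu0']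
    exact hx2

theorem nested_products_image_of_infty_converges
    (α : ℕ → SL(2, ℝ)) (γp γm tax : ℕ → ℝ) (h : IsNestedSequence α γp γm tax) :
    (∀ n, seqProd α n 1 0 ≠ 0) ∧
    (∀ n, 0 < seqProd α n 0 0 / seqProd α n 1 0) ∧
    StrictAnti (fun n => seqProd α n 0 0 / seqProd α n 1 0) ∧
    ∃ L : ℝ, Tendsto (fun n => seqProd α n 0 0 / seqProd α n 1 0) atTop (nhds L) := by
  have hE : ∀ n, (α n 1 0 ≠ 0) ∧ 0 < α n 1 1 * α n 1 0 ∧ (α n 1 0 * γp n + α n 1 1) ≠ 0 ∧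
      α n 0 0 * γp n + α n 0 1 = (α n 1 0 * γp n + α n 1 1) * γp n ∧
      γp n < α n 0 0 / α n 1 0 ∧
      ∀ x : ℝ, x < 0 → 0 < (α n 0 0 - α n 1 0 * x) * α n 1 0 ∧
        (α n 1 1 * x - α n 0 1) * α n 1 0 < 0 := by
    intro n
    exact elem_core (α n 0 0) (α n 0 1) (α n 1 0) (α n 1 1) (γp n) (γm n)
      (h.minus_neg n) (h.plus_pos n) (sl2_det (α n))
      (h.attracting n).1 (h.attracting n).2 (h.repelling n).1 (h.repelling n).2
  have hps : ∀ n, seqProd α (n + 1) = seqProd α n * α (n + 1) := by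
    intro n
    unfold seqProd
    rw [List.range_succ, List.map_append, List.prod_append]
    simp
  have hp0 : seqProd α 0 = α 0 := by
    unfold seqProd
    simp [List.range_succ]
  have hmul : ∀ n, ∀ i j : Fin 2, seqProd α (n + 1) i j
      = seqProd α n i 0 * α (n + 1) 0 j + seqProd α n i 1 * α (n + 1) 1 j := by
    intro n i j
    rw [hps n]
    exact sl2_mul _ _ i j
  have key : ∀ n, (∀ x : ℝ, 0 ≤ x →
      0 < (seqProd α n 1 0 * x + seqProd α n 1 1) * seqProd α n 1 0) ∧
      0 < (seqProd α n 0 0 * γp n + seqProd α n 0 1)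
        / (seqProd α n 1 0 * γp n + seqProd α n 1 1) := by
    intro n
    induction n with
    | zero =>
      obtain ⟨hc, hdc, hu0, hap, hw, hE4⟩ := hE 0
      constructor
      · intro x hx
        rw [hp0]
        nlinarith [hdc, mul_nonneg (sq_nonneg (α 0 1 0)) hx]
      · rw [hp0, hap, mul_comm (α 0 1 0 * γp 0 + α 0 1 1) (γp 0), mul_div_assoc,
          div_self hu0, mul_one]
        exact h.plus_pos 0
    | succ n ih =>
      obtain ⟨ih1, ih2⟩ := ih
      obtain ⟨hc', hdc', hu0', hap', hw', hE4'⟩ := hE (n + 1)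
      obtain ⟨hmono, hbound⟩ := mat_core (seqProd α n 0 0) (seqProd α n 0 1)
        (seqProd α n 1 0) (seqProd α n 1 1) (sl2_det (seqProd α n)) ih1
      have hx2 : 0 < (seqProd α n 0 0 * γp (n + 1) + seqProd α n 0 1)
          / (seqProd α n 1 0 * γp (n + 1) + seqProd α n 1 1) := by
        have := hmono (γp n) (γp (n + 1)) (le_of_lt (h.plus_pos n))
          (h.plus_mono (Nat.lt_succ_self n))
        linarith
      have step := step_core (seqProd α n 0 0) (seqProd α n 0 1) (seqProd α n 1 0)
        (seqProd α n 1 1) (α (n + 1) 0 0) (α (n + 1) 0 1) (α (n + 1) 1 0) (α (n + 1) 1 1)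
        (γp (n + 1)) ih1 (h.plus_pos (n + 1)) hu0' hap' hE4' hx2
      constructor
      · intro x hx
        rw [hmul n 1 0, hmul n 1 1]
        exact step.1 x hx
      · rw [hmul n 0 0, hmul n 0 1, hmul n 1 0, hmul n 1 1]
        exact step.2
  have hCne : ∀ n, seqProd α n 1 0 ≠ 0 := by
    intro n h0
    have h2 := (key n).1 0 le_rfl
    rw [h0] at h2
    simp at h2
  have hxpos : ∀ n, 0 < seqProd α n 0 0 / seqProd α n 1 0 := by
    intro n
    obtain ⟨k1, k2⟩ := key n
    obtain ⟨hmono, hbound⟩ := mat_core (seqProd α n 0 0) (seqProd α n 0 1)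
      (seqProd α n 1 0) (seqProd α n 1 1) (sl2_det (seqProd α n)) k1
    have hb := hbound (γp n) (le_of_lt (h.plus_pos n))
    linarith
  have hanti_succ : ∀ n, seqProd α (n + 1) 0 0 / seqProd α (n + 1) 1 0
      < seqProd α n 0 0 / seqProd α n 1 0 := by
    intro n
    obtain ⟨k1, k2⟩ := key n
    obtain ⟨hmono, hbound⟩ := mat_core (seqProd α n 0 0) (seqProd α n 0 1)
      (seqProd α n 1 0) (seqProd α n 1 1) (sl2_det (seqProd α n)) k1
    obtain ⟨hc', hdc', hu0', hap', hw', hE4'⟩ := hE (n + 1)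
    have hwpos : 0 < α (n + 1) 0 0 / α (n + 1) 1 0 := lt_trans (h.plus_pos (n + 1)) hw'
    have e1 : seqProd α (n + 1) 0 0
        = α (n + 1) 1 0 * (seqProd α n 0 0 * (α (n + 1) 0 0 / α (n + 1) 1 0)
            + seqProd α n 0 1) := by
      rw [hmul n 0 0]
      field_simp
    have e2 : seqProd α (n + 1) 1 0
        = α (n + 1) 1 0 * (seqProd α n 1 0 * (α (n + 1) 0 0 / α (n + 1) 1 0)
            + seqProd α n 1 1) := by
      rw [hmul n 1 0]
      field_simp
    rw [e1, e2, mul_div_mul_left _ _ hc']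
    exact hbound (α (n + 1) 0 0 / α (n + 1) 1 0) (le_of_lt hwpos)
  have hanti : StrictAnti (fun n => seqProd α n 0 0 / seqProd α n 1 0) :=
    strictAnti_nat_of_succ_lt hanti_succ
  refine ⟨hCne, hxpos, hanti, ?_⟩
  refine ⟨⨅ n, seqProd α n 0 0 / seqProd α n 1 0,
    tendsto_atTop_ciInf hanti.antitone ⟨0, ?_⟩⟩
  rintro y ⟨n, rfl⟩
  exact le_of_lt (hxpos n)

end BellisFormal
end
end

section
/- For every u ∈ SL(2,ℝ), every s ∈ ℝ and every t ∈ ℝ, d₁( u * N(s) * A(t), u * A(t) ) ≤ |s| · (e^{−t} + e^{−(t+1)}). (Quantitative contraction of horocyclic displacement under the geodesic flow: d₁(g_t h_s u, g_t u) ≤ |s|(e^{−t} + e^{−(t+1)}).) -/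
open UpperHalfPlane Matrix Real Filter Topology
open scoped MatrixGroups

noncomputable section

namespace BellisFormal

lemma coe_vray (r : ℝ) : (vray r : ℂ) = Real.exp r * Complex.I := by
  simp [vray, Complex.ext_iff, -Complex.ofReal_exp]

lemma coe_A_smul (t r : ℝ) : ((A t • vray r : ℍ) : ℂ) = Real.exp (t + r) * Complex.I := by
  rw [UpperHalfPlane.specialLinearGroup_apply, UpperHalfPlane.coe_mk]
  have h00 : (A t) 0 0 = Real.exp (t/2) := by simp [A]
  have h01 : (A t) 0 1 = 0 := by simp [A]
  have h10 : (A t) 1 0 = 0 := by simp [A]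
  have h11 : (A t) 1 1 = Real.exp (-(t/2)) := by simp [A]
  rw [h00, h01, h10, h11, coe_vray]
  have hne : ((Real.exp (-(t/2)) : ℝ) : ℂ) ≠ 0 :=
    Complex.ofReal_ne_zero.2 (Real.exp_ne_zero _)
  simp only [Algebra.algebraMap_self_apply, Complex.ofReal_zero, zero_mul, zero_add, add_zero]
  rw [div_eq_iff hne]
  have h : ((Real.exp (t/2) : ℝ) : ℂ) * ((Real.exp r : ℝ) : ℂ)
      = ((Real.exp (t + r) : ℝ) : ℂ) * ((Real.exp (-(t/2)) : ℝ) : ℂ) := by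
    rw [← Complex.ofReal_mul, ← Complex.ofReal_mul, ← Real.exp_add, ← Real.exp_add,
      show t/2 + r = t + r + -(t/2) by ring]
  linear_combination Complex.I * h

lemma coe_NA_smul (s t r : ℝ) :
    (((N s * A t) • vray r : ℍ) : ℂ) = s + Real.exp (t + r) * Complex.I := by
  rw [mul_smul, UpperHalfPlane.specialLinearGroup_apply, UpperHalfPlane.coe_mk]
  have h00 : (N s) 0 0 = 1 := by simp [N]
  have h01 : (N s) 0 1 = s := by simp [N]
  have h10 : (N s) 1 0 = 0 := by simp [N]
  have h11 : (N s) 1 1 = 1 := by simp [N]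
  rw [h00, h01, h10, h11, coe_A_smul]
  simp only [Algebra.algebraMap_self_apply, Complex.ofReal_zero, Complex.ofReal_one, zero_mul,
    zero_add, one_mul, div_one]
  ring

lemma key (s t r : ℝ) :
    dist ((N s * A t) • vray r) (A t • vray r) ≤ |s| * Real.exp (-(t + r)) := by
  set z := (N s * A t) • vray r with hzdef
  set w := A t • vray r with hwdef
  have hz : (z : ℂ) = s + Real.exp (t + r) * Complex.I := coe_NA_smul s t r
  have hw : (w : ℂ) = Real.exp (t + r) * Complex.I := coe_A_smul t r
  have hzim : z.im = Real.exp (t + r) := by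
    rw [← UpperHalfPlane.coe_im, hz]; simp [-Complex.ofReal_exp]
  have hwim : w.im = Real.exp (t + r) := by
    rw [← UpperHalfPlane.coe_im, hw]; simp [-Complex.ofReal_exp]
  calc dist z w ≤ dist (z : ℂ) (w : ℂ) / √(z.im * w.im) :=
        UpperHalfPlane.dist_le_dist_coe_div_sqrt z w
    _ = |s| * Real.exp (-(t + r)) := by
        have hsub : (↑s + ↑(Real.exp (t + r)) * Complex.I) - ↑(Real.exp (t + r)) * Complex.I
            = (s : ℂ) := by ring
        rw [hz, hw, hzim, hwim, Real.sqrt_mul_self (Real.exp_pos _).le, Complex.dist_eq, hsub,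
          Complex.norm_real, Real.norm_eq_abs, Real.exp_neg, div_eq_mul_inv]

theorem horocyclic_contraction
    (u : SL(2, ℝ)) (s t : ℝ) :
    d1 (u * N s * A t) (u * A t) ≤ |s| * (Real.exp (-t) + Real.exp (-(t + 1))) := by
  unfold d1
  have h0 := key s t 0
  have h1 := key s t 1
  rw [add_zero] at h0
  have e0 : ∀ r : ℝ, (u * N s * A t) • vray r = u • ((N s * A t) • vray r) := by
    intro r; rw [mul_assoc, mul_smul]
  have e1 : ∀ r : ℝ, (u * A t) • vray r = u • (A t • vray r) := fun r =>
    mul_smul u (A t) _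
  rw [e0, e0, e1, e1, dist_smul, dist_smul, mul_add]
  exact add_le_add h0 h1

end BellisFormal
end
end
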